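/- arXiv:0906.1191 — 9 statements merged into one kernel-verified Lean document; each statement's English description precedes it below -/
import Mathlib

section
/- Let a, b be positive integers with gcd(a,b) = 1 and let r ∈ ℝ. Then there exists v ∈ ℤ² such that S_{a,b,r} = S_{a,b} + v and C_{a,b,r} = C_{a,b} + v, where + denotes translation by the vector v. -/
/-- Membership of a lattice point `z` in the half-plane
`H^σ_{a,b,r} = {x ∈ ℝ² : 0 ≤ σ·((b/a)·x₁ − x₂ + r)}`. -/
def inH (a b σ : ℤ) (r : ℝ) (z : ℤ × ℤ) : Prop :=
  0 ≤ (σ : ℝ) * ((b : ℝ) / (a : ℝ) * (z.1 : ℝ) - (z.2 : ℝ) + r)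

/-- The staircase `S^σ_{a,b,r}`. -/
def stair (a b σ : ℤ) (r : ℝ) : Set (ℤ × ℤ) :=
  {z | inH a b σ r z ∧
    (¬ inH a b σ r (z.1 - σ, z.2) ∨ ¬ inH a b σ r (z.1, z.2 + σ))}

/-- The set of corners `C^σ_{a,b,r}`. -/
def corner (a b σ : ℤ) (r : ℝ) : Set (ℤ × ℤ) :=
  {z | inH a b σ r z ∧
    (¬ inH a b σ r (z.1 - σ, z.2) ∧ ¬ inH a b σ r (z.1, z.2 + σ))}

/-- The column `col_x(A)` of a set `A ⊆ ℤ²`. -/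
def col (x : ℤ) (A : Set (ℤ × ℤ)) : Set (ℤ × ℤ) := {p ∈ A | p.1 = x}

lemma inH_iff (a b : ℤ) (ha : 0 < a) (r : ℝ) (z : ℤ × ℤ) :
    inH a b 1 r z ↔ ⌈-((a:ℝ)*r)⌉ ≤ b*z.1 - a*z.2 := by
  have ha' : (0:ℝ) < a := by exact_mod_cast ha
  unfold inH
  rw [Int.ceil_le]
  have h1 : ((1:ℤ):ℝ) * ((b:ℝ)/a * z.1 - z.2 + r)
      = (((b*z.1 - a*z.2 : ℤ) : ℝ) + a*r)/a := by
    push_cast; field_simp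
  rw [h1, le_div_iff₀ ha', zero_mul]
  push_cast
  constructor <;> intro h <;> linarith

theorem stmt3 (a b : ℤ) (ha : 0 < a) (hb : 0 < b) (hg : Int.gcd a b = 1) (r : ℝ) :
    ∃ v : ℤ × ℤ,
      stair a b 1 r = (fun z => z + v) '' stair a b 1 0 ∧
      corner a b 1 r = (fun z => z + v) '' corner a b 1 0 := by
  set m : ℤ := ⌈-((a:ℝ)*r)⌉ with hm
  obtain ⟨x, y, hxy⟩ : IsCoprime a b := Int.isCoprime_iff_gcd_eq_one.mpr hg
  have hv : b*(m*y) + a*(m*x) = m := by linear_combination m * hxy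
  have hmz : ⌈-((a:ℝ)*0)⌉ = 0 := by norm_num
  refine ⟨(m*y, -(m*x)), ?_, ?_⟩
  · ext z
    simp only [stair, Set.mem_image, Set.mem_setOf_eq, inH_iff a b ha, hmz, ← hm]
    constructor
    · rintro ⟨h1, h2⟩
      refine ⟨(z.1 - m*y, z.2 + m*x), ⟨by (try dsimp only at *); linarith, ?_⟩,
        by simp [Prod.ext_iff]⟩
      rcases h2 with h | h
      · exact Or.inl fun hc => h (by (try dsimp only at *); linarith)
      · exact Or.inr fun hc => h (by (try dsimp only at *); linarith)
    · rintro ⟨w, ⟨h1, h2⟩, rfl⟩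
      simp only [Prod.fst_add, Prod.snd_add]
      refine ⟨by (try dsimp only at *); linarith, ?_⟩
      rcases h2 with h | h
      · exact Or.inl fun hc => h (by (try dsimp only at *); linarith)
      · exact Or.inr fun hc => h (by (try dsimp only at *); linarith)
  · ext z
    simp only [corner, Set.mem_image, Set.mem_setOf_eq, inH_iff a b ha, hmz, ← hm]
    constructor
    · rintro ⟨h1, h2, h3⟩
      exact ⟨(z.1 - m*y, z.2 + m*x),
        ⟨by (try dsimp only at *); linarith,
         fun hc => h2 (by (try dsimp only at *); linarith),
         fun hc => h3 (by (try dsimp only at *); linarith)⟩,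
        by simp [Prod.ext_iff]⟩
    · rintro ⟨w, ⟨h1, h2, h3⟩, rfl⟩
      simp only [Prod.fst_add, Prod.snd_add]
      exact ⟨by (try dsimp only at *); linarith,
        fun hc => h2 (by (try dsimp only at *); linarith),
        fun hc => h3 (by (try dsimp only at *); linarith)⟩
end

section
/- Let a, b be positive integers with gcd(a,b) = 1 and σ ∈ {+1,−1}. Then there exists i ∈ ℤ such that |col_{−n}(S^σ_{a,b})| = |col_{n+i}(S^σ_{a,b})| for all n ∈ ℤ; that is, the column sequence of S^σ_{a,b} is invariant up to shift under reversal. -/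
private lemma ediv_neg_one_sub (a n : ℤ) (ha : 0 < a) : (-1 - n) / a = -(n / a) - 1 := by
  have h1 := Int.emod_nonneg n (ne_of_gt ha)
  have h2 := Int.emod_lt_of_pos n ha
  have hd := Int.mul_ediv_add_emod n a
  have he : -1 - n = (a - 1 - n % a) + (-(n / a) - 1) * a := by linear_combination hd
  rw [he, Int.add_mul_ediv_right _ _ (ne_of_gt ha),
    Int.ediv_eq_zero_of_lt (by linarith) (by linarith)]
  ring

private lemma F_period (a M u k : ℤ) (ha : 0 < a) :
    (u + k * a) / a - (u + k * a - M) / a = u / a - (u - M) / a := by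
  rw [Int.add_mul_ediv_right _ _ (ne_of_gt ha),
      show u + k * a - M = (u - M) + k * a by ring,
      Int.add_mul_ediv_right _ _ (ne_of_gt ha)]
  ring

private lemma F_rev (a M u : ℤ) (ha : 0 < a) :
    (M - 1 - u) / a - (M - 1 - u - M) / a = u / a - (u - M) / a := by
  rw [show M - 1 - u = -1 - (u - M) by ring, show -1 - (u - M) - M = -1 - u by ring,
    ediv_neg_one_sub a (u - M) ha, ediv_neg_one_sub a u ha]
  ring

private lemma F_rev' (a M w : ℤ) (ha : 0 < a) :
    (-w) / a - (-w - M) / a = (w + (M - 1)) / a - (w + (M - 1) - M) / a := by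
  have h := F_rev a M (-w) ha
  rw [show M - 1 - -w = w + (M - 1) by ring] at h
  exact h.symm

private lemma card_slab (a c d : ℤ) (ha : 0 < a) :
    {y : ℤ | c < y * a ∧ y * a ≤ d}.ncard = (d / a - c / a).toNat := by
  have hset : {y : ℤ | c < y * a ∧ y * a ≤ d} = Set.Ioc (c / a) (d / a) := by
    ext y
    simp only [Set.mem_setOf_eq, Set.mem_Ioc, Int.ediv_lt_iff_lt_mul ha,
      Int.le_ediv_iff_mul_le ha]
  rw [hset, ← Finset.coe_Ioc, Set.ncard_coe_finset, Int.card_Ioc]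

private lemma card_slab' (a c d : ℤ) (ha : 0 < a) :
    {y : ℤ | c ≤ y * a ∧ y * a < d}.ncard = ((-c) / a - (-d) / a).toNat := by
  have hst : {y : ℤ | c ≤ y * a ∧ y * a < d} =
      (fun y : ℤ => -y) '' {y : ℤ | -d < y * a ∧ y * a ≤ -c} := by
    ext y
    simp only [Set.mem_setOf_eq, Set.mem_image]
    constructor
    · rintro ⟨h1, h2⟩
      exact ⟨-y, ⟨by rw [neg_mul]; linarith, by rw [neg_mul]; linarith⟩, neg_neg y⟩
    · rintro ⟨w, ⟨h1, h2⟩, rfl⟩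
      refine ⟨?_, ?_⟩ <;> rw [neg_mul] <;> linarith
  rw [hst, Set.ncard_image_of_injective _ neg_injective, card_slab a (-d) (-c) ha]

private lemma inH_one (a b : ℤ) (ha : 0 < a) (z : ℤ × ℤ) :
    inH a b 1 0 z ↔ a * z.2 ≤ b * z.1 := by
  unfold inH
  have ha' : (0 : ℝ) < (a : ℝ) := by exact_mod_cast ha
  rw [Int.cast_one, one_mul, add_zero, sub_nonneg, div_mul_eq_mul_div, le_div_iff₀ ha']
  rw [show (z.2 : ℝ) * (a : ℝ) = ((a * z.2 : ℤ) : ℝ) by push_cast; ring,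
      show (b : ℝ) * (z.1 : ℝ) = ((b * z.1 : ℤ) : ℝ) by push_cast; ring]
  exact Int.cast_le

private lemma inH_neg (a b : ℤ) (ha : 0 < a) (z : ℤ × ℤ) :
    inH a b (-1) 0 z ↔ b * z.1 ≤ a * z.2 := by
  unfold inH
  have ha' : (0 : ℝ) < (a : ℝ) := by exact_mod_cast ha
  rw [show (((-1 : ℤ) : ℝ)) = -1 by push_cast; ring, add_zero, neg_mul, one_mul,
    neg_nonneg, sub_nonpos, div_mul_eq_mul_div, div_le_iff₀ ha']
  rw [show (z.2 : ℝ) * (a : ℝ) = ((a * z.2 : ℤ) : ℝ) by push_cast; ring,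
      show (b : ℝ) * (z.1 : ℝ) = ((b * z.1 : ℤ) : ℝ) by push_cast; ring]
  exact Int.cast_le

private lemma col_ncard (x : ℤ) (A : Set (ℤ × ℤ)) :
    (col x A).ncard = {y : ℤ | (x, y) ∈ A}.ncard := by
  have h : col x A = (fun y => (x, y)) '' {y : ℤ | (x, y) ∈ A} := by
    ext ⟨p, q⟩
    simp only [col, Set.mem_setOf_eq, Set.mem_image]
    constructor
    · rintro ⟨hA, rfl⟩; exact ⟨q, hA, rfl⟩
    · rintro ⟨y, hy, h⟩
      rw [Prod.mk.injEq] at h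
      obtain ⟨h1, h2⟩ := h
      subst h1; subst h2; exact ⟨hy, rfl⟩
  rw [h, Set.ncard_image_of_injective _ (fun y₁ y₂ hy => by simpa using hy)]

private lemma logic1 (a b B t : ℤ) (ha : 0 < a) (hb : 0 < b) :
    (t ≤ B ∧ (¬ t ≤ B - b ∨ ¬ t + a ≤ B)) ↔ (B - max a b < t ∧ t ≤ B) := by
  rcases le_total a b with h | h
  · rw [max_eq_right h]; omega
  · rw [max_eq_left h]; omega

private lemma logic2 (a b B t : ℤ) (ha : 0 < a) (hb : 0 < b) :
    (B ≤ t ∧ (¬ B + b ≤ t ∨ ¬ B ≤ t - a)) ↔ (B ≤ t ∧ t < B + max a b) := by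
  rcases le_total a b with h | h
  · rw [max_eq_right h]; omega
  · rw [max_eq_left h]; omega

private lemma colset_pos (a b x : ℤ) (ha : 0 < a) (hb : 0 < b) :
    {y : ℤ | (x, y) ∈ stair a b 1 0} =
      {y : ℤ | b * x - max a b < y * a ∧ y * a ≤ b * x} := by
  ext y
  simp only [stair, Set.mem_setOf_eq, inH_one a b ha]
  rw [show b * (x - 1) = b * x - b by ring, show a * (y + 1) = a * y + a by ring,
      mul_comm a y]
  exact logic1 a b (b * x) (y * a) ha hb

private lemma colset_neg (a b x : ℤ) (ha : 0 < a) (hb : 0 < b) :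
    {y : ℤ | (x, y) ∈ stair a b (-1) 0} =
      {y : ℤ | b * x ≤ y * a ∧ y * a < b * x + max a b} := by
  ext y
  simp only [stair, Set.mem_setOf_eq, inH_neg a b ha]
  rw [show (x - (-1) : ℤ) = x + 1 by ring, show (y + (-1) : ℤ) = y - 1 by ring]
  rw [show b * (x + 1) = b * x + b by ring, show a * (y - 1) = a * y - a by ring,
      mul_comm a y]
  exact logic2 a b (b * x) (y * a) ha hb

theorem stmt7 (a b σ : ℤ) (ha : 0 < a) (hb : 0 < b) (hg : Int.gcd a b = 1)
    (hσ : σ = 1 ∨ σ = -1) :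
    ∃ i : ℤ, ∀ n : ℤ,
      (col (-n) (stair a b σ 0)).ncard = (col (n + i) (stair a b σ 0)).ncard := by
  obtain ⟨u, v, huv⟩ := Int.isCoprime_iff_gcd_eq_one.mpr hg
  set M : ℤ := max a b with hM
  rcases hσ with rfl | rfl
  · refine ⟨v * (M - 1), fun n => ?_⟩
    have hcol : ∀ x : ℤ, (col x (stair a b 1 0)).ncard
        = ((b * x) / a - (b * x - M) / a).toNat := by
      intro x
      rw [col_ncard, colset_pos a b x ha hb, ← hM, card_slab a _ _ ha]
    rw [hcol, hcol]
    congr 1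
    have e1 : b * (n + v * (M - 1)) = (b * n + (M - 1)) + (-(u * (M - 1))) * a := by
      linear_combination (M - 1) * huv
    rw [mul_neg, e1, F_period a M (b * n + (M - 1)) (-(u * (M - 1))) ha]
    exact F_rev' a M (b * n) ha
  · refine ⟨-(v * (M - 1)), fun n => ?_⟩
    have hcol : ∀ x : ℤ, (col x (stair a b (-1) 0)).ncard
        = ((-(b * x)) / a - (-(b * x) - M) / a).toNat := by
      intro x
      rw [col_ncard, colset_neg a b x ha hb, ← hM, card_slab' a _ _ ha,
        show (-(b * x + M) : ℤ) = -(b * x) - M by ring]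
    rw [hcol, hcol]
    congr 1
    have e2 : -(b * (n + -(v * (M - 1)))) = (-(b * n) + (M - 1)) + (-(u * (M - 1))) * a := by
      linear_combination (M - 1) * huv
    rw [show (-(b * -n) : ℤ) = b * n by ring, e2,
      F_period a M (-(b * n) + (M - 1)) (-(u * (M - 1))) ha]
    have h := F_rev' a M (-(b * n)) ha
    rw [neg_neg] at h
    exact h
end

section
/- Let a, b be positive integers with a < b and gcd(a,b) = 1. For every n ∈ ℤ, the column col_n(C_{a, b mod a}) is nonempty if and only if |col_n(S_{a,b})| = (b div a) + 1 (i.e. if and only if column n of S_{a,b} is long). -/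
lemma inH_iff_s10 (a c : ℤ) (ha : 0 < a) (x y : ℤ) :
    inH a c 1 0 (x, y) ↔ a * y ≤ c * x := by
  have ha' : (0:ℝ) < (a:ℝ) := by exact_mod_cast ha
  simp only [inH, Int.cast_one, one_mul, add_zero, sub_nonneg, div_mul_eq_mul_div,
    le_div_iff₀ ha']
  rw [mul_comm ((y:ℝ)) ((a:ℝ))]
  exact_mod_cast Iff.rfl

theorem stmt10 (a b : ℤ) (ha : 0 < a) (hab : a < b) (hg : Int.gcd a b = 1) :
    ∀ n : ℤ, (col n (corner a (b % a) 1 0)).Nonempty ↔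
      ((col n (stair a b 1 0)).ncard : ℤ) = b / a + 1 := by
  intro n
  have key : ∀ c x y : ℤ, inH a c 1 0 (x, y) ↔ a * y ≤ c * x := fun c x y => inH_iff_s10 a c ha x y
  obtain ⟨s, hs⟩ : ∃ s, b % a = s := ⟨_, rfl⟩
  obtain ⟨q, hq⟩ : ∃ q, b / a = q := ⟨_, rfl⟩
  have hs0 : 0 ≤ s := hs ▸ Int.emod_nonneg b ha.ne'
  have hsa : s < a := hs ▸ Int.emod_lt_of_pos b ha
  have hb : b = a * q + s := by rw [← hq, ← hs]; exact (Int.mul_ediv_add_emod b a).symm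
  obtain ⟨gm, hgm⟩ : ∃ g, s * (n-1) / a = g := ⟨_, rfl⟩
  obtain ⟨gn, hgn⟩ : ∃ g, s * n / a = g := ⟨_, rfl⟩
  rw [hs, hq]
  -- column of staircase description
  have hcol : ∀ x y : ℤ, ((x,y) ∈ col n (stair a b 1 0)) ↔
      (x = n ∧ b*(n-1)/a < y ∧ y ≤ b*n/a) := by
    intro x y
    simp only [col, stair, Set.mem_setOf_eq, key]
    constructor
    · rintro ⟨⟨h1, h2⟩, rfl⟩
      refine ⟨rfl, ?_, ?_⟩
      · rw [Int.ediv_lt_iff_lt_mul ha]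
        rcases h2 with h2 | h2
        · push_neg at h2; linarith [mul_comm y a]
        · push_neg at h2; nlinarith [mul_comm y a]
      · rw [Int.le_ediv_iff_mul_le ha]; linarith [mul_comm y a]
    · rintro ⟨hx, h1, h2⟩
      subst hx
      rw [Int.ediv_lt_iff_lt_mul ha] at h1
      rw [Int.le_ediv_iff_mul_le ha] at h2
      refine ⟨⟨by linarith [mul_comm y a], Or.inl ?_⟩, rfl⟩
      push_neg
      have e2 : b*(x-1) = b*x - b := by ring
      linarith [mul_comm y a]
  have himg : col n (stair a b 1 0) =
      (fun y => (n, y)) '' Set.Ioc (b*(n-1)/a) (b*n/a) := by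
    ext ⟨x, y⟩
    rw [hcol]
    constructor
    · rintro ⟨hx, h1, h2⟩; subst hx; exact ⟨y, ⟨h1, h2⟩, rfl⟩
    · rintro ⟨y', h, he⟩
      simp only [Prod.mk.injEq] at he
      obtain ⟨rfl, rfl⟩ := he
      exact ⟨rfl, h.1, h.2⟩
  have hcard : ((col n (stair a b 1 0)).ncard : ℤ) = (b*n/a - b*(n-1)/a).toNat := by
    rw [himg, Set.ncard_image_of_injective _ (fun y1 y2 h => by simpa using h),
      ← Finset.coe_Ioc, Set.ncard_coe_finset, Int.card_Ioc]
  -- arithmetic on floors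
  have hfn : b*n/a = q*n + gn := by
    rw [show b*n = s*n + (q*n)*a by rw [hb]; ring, Int.add_mul_ediv_right _ _ ha.ne', hgn]
    exact add_comm _ _
  have hfm : b*(n-1)/a = q*(n-1) + gm := by
    rw [show b*(n-1) = s*(n-1) + (q*(n-1))*a by rw [hb]; ring,
      Int.add_mul_ediv_right _ _ ha.ne', hgm]
    exact add_comm _ _
  have hg0 : gm ≤ gn := by
    rw [← hgm, ← hgn]; exact Int.ediv_le_ediv ha (by nlinarith)
  have hg1 : gn ≤ gm + 1 := by
    rw [← hgm, ← hgn]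
    have h : s*n ≤ s*(n-1) + 1*a := by nlinarith
    calc s*n/a ≤ (s*(n-1) + 1*a)/a := Int.ediv_le_ediv ha h
    _ = s*(n-1)/a + 1 := by rw [Int.add_mul_ediv_right _ _ ha.ne']
  have hq1 : 1 ≤ q := by
    rw [← hq, Int.le_ediv_iff_mul_le ha]; linarith
  have hd1 : a * gn + s*n % a = s*n := by rw [← hgn]; exact Int.mul_ediv_add_emod _ _
  have hd2 : a * gm + s*(n-1) % a = s*(n-1) := by rw [← hgm]; exact Int.mul_ediv_add_emod _ _
  have hr1 : 0 ≤ s*n % a := Int.emod_nonneg _ ha.ne'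
  have hr1' : s*n % a < a := Int.emod_lt_of_pos _ ha
  have hr2 : 0 ≤ s*(n-1) % a := Int.emod_nonneg _ ha.ne'
  have hr2' : s*(n-1) % a < a := Int.emod_lt_of_pos _ ha
  -- corner side
  have hcorner : (col n (corner a s 1 0)).Nonempty ↔ gm < gn := by
    constructor
    · rintro ⟨⟨x, y⟩, hmem⟩
      simp only [col, corner, Set.mem_setOf_eq, key] at hmem
      obtain ⟨⟨h1, h2, h3⟩, rfl⟩ := hmem
      push_neg at h2 h3
      have hy1 : gm < y := by
        rw [← hgm, Int.ediv_lt_iff_lt_mul ha]; linarith [mul_comm y a]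
      have hy2 : y ≤ gn := by
        rw [← hgn, Int.le_ediv_iff_mul_le ha]; linarith [mul_comm y a]
      omega
    · intro h
      refine ⟨(n, gn), ?_⟩
      simp only [col, corner, Set.mem_setOf_eq, key]
      have hmono : a * (gm + 1) ≤ a * gn := mul_le_mul_of_nonneg_left (by omega) ha.le
      have e1 : a * (gm + 1) = a * gm + a := by ring
      have e2 : a * (gn + 1) = a * gn + a := by ring
      refine ⟨⟨by linarith, ?_, ?_⟩, trivial⟩
      · push_neg; linarith
      · push_neg; linarith
  rw [hcorner, hcard]
  have hnn : 0 ≤ b*n/a - b*(n-1)/a := by rw [hfn, hfm]; nlinarith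
  rw [Int.toNat_of_nonneg hnn, hfn, hfm]
  have e : q*n = q*(n-1) + q := by ring
  omega
end

section
/- Let n ≥ 2 and d be integers with 1 ≤ d ≤ n − 1 and gcd(d,n) = 1. Then the tetrahedron T_{1,d,n} is empty; that is, the only lattice points of ℤ³ contained in conv{(0,0,0), (1,0,0), (0,1,0), (1,d,n)} are its four vertices. -/
lemma halfspace_bound {a b c r : ℝ} {S : Set (Fin 3 → ℝ)}
    (h : ∀ q ∈ S, a * q 0 + b * q 1 + c * q 2 ≤ r) :
    ∀ q ∈ convexHull ℝ S, a * q 0 + b * q 1 + c * q 2 ≤ r := by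
  intro q hq
  have hf : IsLinearMap ℝ (fun q : Fin 3 → ℝ => a * q 0 + b * q 1 + c * q 2) := by
    constructor
    · intro x y; simp [Pi.add_apply]; ring
    · intro t x; simp [Pi.smul_apply, smul_eq_mul]; ring
  have := convexHull_min (fun x hx => h x hx) (convex_halfSpace_le hf r) hq
  exact this

theorem stmt12 (n d : ℤ) (hn : 2 ≤ n) (hd1 : 1 ≤ d) (hd2 : d ≤ n - 1)
    (hg : Int.gcd d n = 1) :
    {p : Fin 3 → ℤ | (fun i => (p i : ℝ)) ∈
        convexHull ℝ ({![0, 0, 0], ![1, 0, 0], ![0, 1, 0],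
          ![1, (d : ℝ), (n : ℝ)]} : Set (Fin 3 → ℝ))} =
      ({![0, 0, 0], ![1, 0, 0], ![0, 1, 0], ![1, d, n]} : Set (Fin 3 → ℤ)) := by
  ext p
  simp only [Set.mem_setOf_eq, Set.mem_insert_iff, Set.mem_singleton_iff]
  constructor
  · intro hp
    set S : Set (Fin 3 → ℝ) := {![0, 0, 0], ![1, 0, 0], ![0, 1, 0], ![1, (d : ℝ), (n : ℝ)]}
    -- four halfspace inequalities
    have h1 : (-1 : ℝ) * (p 0 : ℝ) + 0 * (p 1 : ℝ) + 0 * (p 2 : ℝ) ≤ 0 →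
        True := fun _ => trivial
    have e1 := halfspace_bound (a := 0) (b := 0) (c := -1) (r := 0) (S := S)
      (by rintro q (rfl | rfl | rfl | rfl) <;> norm_num [Matrix.cons_val_two] <;>
        first | omega | rw [mul_comm]) _ hp
    have e2 := halfspace_bound (a := -(n : ℝ)) (b := 0) (c := 1) (r := 0) (S := S)
      (by rintro q (rfl | rfl | rfl | rfl) <;> norm_num [Matrix.cons_val_two] <;>
        first | omega | rw [mul_comm]) _ hp
    have e3 := halfspace_bound (a := 0) (b := -(n : ℝ)) (c := (d : ℝ)) (r := 0) (S := S)
      (by rintro q (rfl | rfl | rfl | rfl) <;> norm_num [Matrix.cons_val_two] <;>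
        first | omega | rw [mul_comm]) _ hp
    have e4 := halfspace_bound (a := (n : ℝ)) (b := (n : ℝ)) (c := -(d : ℝ)) (r := n) (S := S)
      (by rintro q (rfl | rfl | rfl | rfl) <;> norm_num [Matrix.cons_val_two] <;>
        first | omega | rw [mul_comm]) _ hp
    -- cast to integers
    have i1 : (0 : ℤ) ≤ p 2 := by
      have : (0 : ℝ) ≤ (p 2 : ℝ) := by linarith
      exact_mod_cast this
    have i2 : p 2 ≤ n * p 0 := by
      have : ((p 2 : ℤ) : ℝ) ≤ ((n * p 0 : ℤ) : ℝ) := by push_cast; linarith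
      exact_mod_cast this
    have i3 : d * p 2 ≤ n * p 1 := by
      have : ((d * p 2 : ℤ) : ℝ) ≤ ((n * p 1 : ℤ) : ℝ) := by push_cast; linarith
      exact_mod_cast this
    have i4 : n * p 0 + n * p 1 ≤ n + d * p 2 := by
      have : ((n * p 0 + n * p 1 : ℤ) : ℝ) ≤ ((n + d * p 2 : ℤ) : ℝ) := by push_cast; linarith
      exact_mod_cast this
    set x := p 0; set y := p 1; set z := p 2
    have hnpos : (0 : ℤ) < n := by omega
    rcases eq_or_lt_of_le i1 with hz0 | hzpos
    · -- z = 0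
      have hz : z = 0 := hz0.symm
      have hx0 : 0 ≤ x := by nlinarith
      have hy0 : 0 ≤ y := by nlinarith
      have hxy : x + y ≤ 1 := by nlinarith
      have : (x = 0 ∧ y = 0) ∨ (x = 1 ∧ y = 0) ∨ (x = 0 ∧ y = 1) := by omega
      rcases this with ⟨hx, hy⟩ | ⟨hx, hy⟩ | ⟨hx, hy⟩
      · left; funext i; fin_cases i
        · simpa using hx
        · simpa using hy
        · simpa using hz
      · right; left; funext i; fin_cases i
        · simpa using hx
        · simpa using hy
        · simpa using hz
      · right; right; left; funext i; fin_cases i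
        · simpa using hx
        · simpa using hy
        · simpa using hz
    · -- z > 0
      have hx1 : 1 ≤ x := by nlinarith
      have hzn : z ≤ n := by
        by_contra h
        push_neg at h
        have hy1 : d ≤ y := by nlinarith
        nlinarith
      rcases eq_or_lt_of_le hzn with hzn' | hzlt
      · -- z = n
        have hy1 : d ≤ y := by nlinarith
        have hx : x = 1 := by nlinarith
        have hy : y = d := by nlinarith
        right; right; right; funext i; fin_cases i
        · simpa using hx
        · simpa using hy
        · simpa using hzn'
      · -- 0 < z < n : contradiction
        exfalso
        have hnx : n ≤ n * x := by nlinarith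
        have heq : n * y = d * z := by nlinarith
        have hdvd : n ∣ d * z := ⟨y, heq.symm⟩
        have hcop : IsCoprime (n : ℤ) (d : ℤ) := by
          rw [Int.isCoprime_iff_gcd_eq_one, Int.gcd_comm]
          exact hg
        have hnz : n ∣ z := hcop.dvd_of_dvd_mul_left hdvd
        have := Int.le_of_dvd hzpos hnz
        omega
  · rintro (rfl | rfl | rfl | rfl)
    · have h : (fun i => ((![0, 0, 0] : Fin 3 → ℤ) i : ℝ)) = ![0, 0, 0] := by
        funext i; fin_cases i <;> simp
      rw [h]; exact subset_convexHull ℝ _ (by simp)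
    · have h : (fun i => ((![1, 0, 0] : Fin 3 → ℤ) i : ℝ)) = ![1, 0, 0] := by
        funext i; fin_cases i <;> simp
      rw [h]; exact subset_convexHull ℝ _ (by simp)
    · have h : (fun i => ((![0, 1, 0] : Fin 3 → ℤ) i : ℝ)) = ![0, 1, 0] := by
        funext i; fin_cases i <;> simp
      rw [h]; exact subset_convexHull ℝ _ (by simp)
    · have h : (fun i => ((![1, d, n] : Fin 3 → ℤ) i : ℝ)) = ![1, (d : ℝ), (n : ℝ)] := by
        funext i; fin_cases i <;> simp
      rw [h]; exact subset_convexHull ℝ _ (by simp)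
end

section
/- Let a, b be positive integers with a < b, let q = b div a, and let A : ℤ² → ℤ² be the linear map A(x,y) = (x, q·x + y). Then T_{a,b} = A(T_{a, b mod a}) ∪ T'_{a, q·a}. -/
/-- The lattice points of the closed triangle `Δ_{a,b} = conv{(0,0), (a,0), (a,b)}`. -/
def triPts (a b : ℤ) : Set (ℤ × ℤ) :=
  {z | (((z.1 : ℝ), (z.2 : ℝ)) : ℝ × ℝ) ∈
    convexHull ℝ ({(0, 0), ((a : ℝ), 0), ((a : ℝ), (b : ℝ))} : Set (ℝ × ℝ))}

/-- The lattice points of the half-open triangle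
`Δ'_{a,b} = Δ_{a,b} \ conv{(0,0), (a,b)}`. -/
def triPts' (a b : ℤ) : Set (ℤ × ℤ) :=
  {z | (((z.1 : ℝ), (z.2 : ℝ)) : ℝ × ℝ) ∈
    convexHull ℝ ({(0, 0), ((a : ℝ), 0), ((a : ℝ), (b : ℝ))} : Set (ℝ × ℝ)) \
      convexHull ℝ ({(0, 0), ((a : ℝ), (b : ℝ))} : Set (ℝ × ℝ))}



lemma tri_mem {a b : ℝ} (ha : 0 < a) (hb : 0 ≤ b) {x y : ℝ} :
    ((x, y) : ℝ × ℝ) ∈ convexHull ℝ ({(0, 0), (a, 0), (a, b)} : Set (ℝ × ℝ)) ↔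
      0 ≤ x ∧ x ≤ a ∧ 0 ≤ y ∧ a * y ≤ b * x := by
  constructor
  · intro h
    have hconv : Convex ℝ {p : ℝ × ℝ | 0 ≤ p.1 ∧ p.1 ≤ a ∧ 0 ≤ p.2 ∧ a * p.2 ≤ b * p.1} := by
      rintro p hp q hq u v hu hv huv
      simp only [Set.mem_setOf_eq, Prod.fst_add, Prod.snd_add, Prod.smul_fst, Prod.smul_snd,
        smul_eq_mul] at *
      obtain ⟨hp1, hp2, hp3, hp4⟩ := hp
      obtain ⟨hq1, hq2, hq3, hq4⟩ := hq
      refine ⟨by positivity, by nlinarith, by positivity, by nlinarith⟩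
    have hsub : ({(0, 0), (a, 0), (a, b)} : Set (ℝ × ℝ)) ⊆
        {p : ℝ × ℝ | 0 ≤ p.1 ∧ p.1 ≤ a ∧ 0 ≤ p.2 ∧ a * p.2 ≤ b * p.1} := by
      rintro p (rfl | rfl | rfl) <;>
        simp only [Set.mem_setOf_eq] <;>
        refine ⟨by positivity, by linarith, by positivity, by nlinarith⟩
    exact convexHull_min hsub hconv h
  · rintro ⟨hx0, hxa, hy0, hxy⟩
    rcases eq_or_lt_of_le hb with hb0 | hb0
    · -- b = 0, hence y = 0
      have hy : y = 0 := by nlinarith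
      subst hy
      rw [← hb0]
      have : ((x, 0) : ℝ × ℝ) ∈ segment ℝ ((0, 0) : ℝ × ℝ) (a, 0) := by
        refine ⟨1 - x / a, x / a, by
          have : x / a ≤ 1 := by rw [div_le_one ha]; linarith
          linarith, by positivity, by ring, ?_⟩
        simp only [Prod.smul_mk, smul_eq_mul, Prod.mk_add_mk, Prod.mk.injEq]
        constructor <;> field_simp <;> ring
      exact (convex_convexHull ℝ _).segment_subset
        (subset_convexHull ℝ _ (by simp)) (subset_convexHull ℝ _ (by simp)) this
    · rcases eq_or_lt_of_le hx0 with hx0' | hx0'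
      · have hy : y = 0 := by nlinarith
        subst hy
        rw [← hx0']
        exact subset_convexHull ℝ _ (by simp)
      · -- x > 0, b > 0
        set Q : ℝ × ℝ := (a, a * y / x) with hQ
        have hQseg : Q ∈ segment ℝ ((a, 0) : ℝ × ℝ) (a, b) := by
          refine ⟨1 - a * y / (x * b), a * y / (x * b), ?_, by positivity, by ring, ?_⟩
          · have : a * y / (x * b) ≤ 1 := by
              rw [div_le_one (by positivity)]
              nlinarith
            linarith
          · simp only [Prod.smul_mk, smul_eq_mul, Prod.mk_add_mk, Prod.mk.injEq, hQ]
            constructor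
            · ring
            · field_simp
              ring
        have hQh : Q ∈ convexHull ℝ ({(0, 0), (a, 0), (a, b)} : Set (ℝ × ℝ)) :=
          (convex_convexHull ℝ _).segment_subset
            (subset_convexHull ℝ _ (by simp)) (subset_convexHull ℝ _ (by simp)) hQseg
        have hseg : ((x, y) : ℝ × ℝ) ∈ segment ℝ ((0, 0) : ℝ × ℝ) Q := by
          refine ⟨1 - x / a, x / a, by
            have : x / a ≤ 1 := by rw [div_le_one ha]; linarith
            linarith, by positivity, by ring, ?_⟩
          simp only [Prod.smul_mk, smul_eq_mul, Prod.mk_add_mk, Prod.mk.injEq, hQ]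
          refine ⟨by field_simp; ring, ?_⟩
          field_simp
          ring
        exact (convex_convexHull ℝ _).segment_subset
          (subset_convexHull ℝ _ (by simp)) hQh hseg

lemma seg_mem {a b : ℝ} (ha : 0 < a) {x y : ℝ} :
    ((x, y) : ℝ × ℝ) ∈ convexHull ℝ ({(0, 0), (a, b)} : Set (ℝ × ℝ)) ↔
      0 ≤ x ∧ x ≤ a ∧ a * y = b * x := by
  rw [convexHull_pair]
  constructor
  · rintro ⟨u, v, hu, hv, huv, heq⟩
    simp only [Prod.smul_mk, smul_eq_mul, Prod.mk_add_mk, Prod.mk.injEq] at heq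
    obtain ⟨h1, h2⟩ := heq
    refine ⟨by nlinarith, by nlinarith, by linear_combination b * h1 - a * h2⟩
  · rintro ⟨hx0, hxa, hxy⟩
    refine ⟨1 - x / a, x / a, by
      have : x / a ≤ 1 := by rw [div_le_one ha]; linarith
      linarith, by positivity, by ring, ?_⟩
    simp only [Prod.smul_mk, smul_eq_mul, Prod.mk_add_mk, Prod.mk.injEq]
    constructor
    · field_simp; ring
    · field_simp
      nlinarith

theorem stmt14 (a b : ℤ) (ha : 0 < a) (hab : a < b) :
    triPts a b =
      (fun z : ℤ × ℤ => (z.1, b / a * z.1 + z.2)) '' triPts a (b % a) ∪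
        triPts' a (b / a * a) := by
  have ha' : (0 : ℝ) < (a : ℝ) := by exact_mod_cast ha
  have hb' : (0 : ℝ) ≤ (b : ℝ) := by exact_mod_cast (le_of_lt (ha.trans hab))
  have hr : 0 ≤ b % a := Int.emod_nonneg b ha.ne'
  have hr' : (0 : ℝ) ≤ ((b % a : ℤ) : ℝ) := by exact_mod_cast hr
  have hq : 1 ≤ b / a := by
    rw [Int.le_ediv_iff_mul_le ha]; linarith
  have hqa : 0 < b / a * a := by positivity
  have hqa' : (0 : ℝ) ≤ ((b / a * a : ℤ) : ℝ) := by exact_mod_cast hqa.le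
  have hdm : a * (b / a) + b % a = b := Int.mul_ediv_add_emod b a
  ext ⟨x, y⟩
  simp only [triPts, triPts', Set.mem_union, Set.mem_image, Set.mem_setOf_eq, Set.mem_diff,
    tri_mem ha' hb', tri_mem ha' hr', tri_mem ha' hqa', seg_mem ha', Prod.mk.injEq]
  constructor
  · rintro ⟨hx0, hxa, hy0, hxy⟩
    have hx0' : 0 ≤ x := by exact_mod_cast hx0
    have hxa' : x ≤ a := by exact_mod_cast hxa
    have hy0' : 0 ≤ y := by exact_mod_cast hy0
    have hxy' : a * y ≤ b * x := by exact_mod_cast hxy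
    by_cases hcase : y < b / a * x
    · right
      have hlt : a * y < b / a * a * x := by
        have h1 : a * y < a * (b / a * x) := mul_lt_mul_of_pos_left hcase ha
        nlinarith
      refine ⟨⟨hx0, hxa, hy0, ?_⟩, ?_⟩
      · exact_mod_cast hlt.le
      · rintro ⟨-, -, heq⟩
        have heq' : a * y = b / a * a * x := by exact_mod_cast heq
        omega
    · left
      push_neg at hcase
      refine ⟨⟨x, y - b / a * x⟩, ⟨hx0, hxa, ?_, ?_⟩, rfl, by ring⟩
      · have : (0 : ℤ) ≤ y - b / a * x := by linarith
        exact_mod_cast this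
      · have : a * (y - b / a * x) ≤ (b % a) * x := by nlinarith
        exact_mod_cast this
  · rintro (⟨⟨u, v⟩, ⟨hu0, hua, hv0, huv⟩, hux, hvy⟩ | ⟨⟨hx0, hxa, hy0, hxy⟩, -⟩)
    · have hu0' : 0 ≤ u := by exact_mod_cast hu0
      have hua' : u ≤ a := by exact_mod_cast hua
      have hv0' : 0 ≤ v := by exact_mod_cast hv0
      have huv' : a * v ≤ (b % a) * u := by exact_mod_cast huv
      subst hux hvy
      refine ⟨hu0, hua, ?_, ?_⟩
      · have : (0 : ℤ) ≤ b / a * u + v := by positivity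
        exact_mod_cast this
      · have : a * (b / a * u + v) ≤ b * u := by nlinarith
        exact_mod_cast this
    · have hx0' : 0 ≤ x := by exact_mod_cast hx0
      have hxa' : x ≤ a := by exact_mod_cast hxa
      have hy0' : 0 ≤ y := by exact_mod_cast hy0
      have hxy' : a * y ≤ b / a * a * x := by exact_mod_cast hxy
      refine ⟨hx0, hxa, hy0, ?_⟩
      have : a * y ≤ b * x := by nlinarith
      exact_mod_cast this
end

section
/- Let a, b be integers with 1 ≤ b < a and let s : ℤ → ℤ be a periodic 0,1-sequence whose minimal period is a and with 𝟙(s) = b. Then s ≡ B_{a,b} (i.e. s is a shift of the Sturmian sequence B_{a,b}) if and only if the 1s in s are evenly distributed, i.e. for all integers x₀ ≤ x₁, writing l = x₁ − x₀ + 1 and t = #{n ∈ ℤ : x₀ ≤ n ≤ x₁ and s(n) = 1}, one has t ∈ {⌊b·l/a⌋, ⌈b·l/a⌉}. -/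
/-- The Beatty sequence `B_{a,b}(n) = ⌊b·n/a⌋ − ⌊b·(n−1)/a⌋`. -/
def beatty (a b n : ℤ) : ℤ := ⌊(b * n : ℚ) / a⌋ - ⌊(b * (n - 1) : ℚ) / a⌋


lemma floor_idiv (x : ℤ) {a : ℤ} (ha : 0 < a) : ⌊(x:ℚ)/(a:ℚ)⌋ = x / a := by
  obtain ⟨d, rfl⟩ := Int.eq_ofNat_of_zero_le ha.le
  exact_mod_cast Rat.floor_intCast_div_natCast x d

lemma card_filter_eq_sum (s : ℤ → ℤ) (h01 : ∀ n, s n = 0 ∨ s n = 1) (t : Finset ℤ) :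
    ((t.filter fun n => s n = 1).card : ℤ) = ∑ n ∈ t, s n := by
  rw [Finset.card_filter]
  push_cast
  refine Finset.sum_congr rfl fun n _ => ?_
  rcases h01 n with h | h <;> simp [h]

lemma Icc_insert (x y : ℤ) (h : x ≤ y + 1) :
    Finset.Icc x (y + 1) = insert (y + 1) (Finset.Icc x y) := by
  ext n; simp; omega

lemma sum_Icc_top (f : ℤ → ℤ) (x y : ℤ) (h : x ≤ y + 1) :
    ∑ n ∈ Finset.Icc x (y + 1), f n = (∑ n ∈ Finset.Icc x y, f n) + f (y + 1) := by
  rw [Icc_insert x y h, Finset.sum_insert (by simp)]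
  ring

lemma floor_ceil_pair (θ φ : ℚ) : ⌊θ + φ⌋ - ⌊φ⌋ = ⌊θ⌋ ∨ ⌊θ + φ⌋ - ⌊φ⌋ = ⌈θ⌉ := by
  have h1 : ⌊θ⌋ + ⌊φ⌋ ≤ ⌊θ + φ⌋ := Int.le_floor.2 (by
    push_cast
    exact add_le_add (Int.floor_le θ) (Int.floor_le φ))
  have h2 : ⌊θ + φ⌋ ≤ ⌈θ⌉ + ⌊φ⌋ := by
    have : θ + φ ≤ (⌈θ⌉ : ℚ) + φ := by linarith [Int.le_ceil θ]
    calc ⌊θ + φ⌋ ≤ ⌊(⌈θ⌉ : ℚ) + φ⌋ := Int.floor_le_floor this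
      _ = ⌈θ⌉ + ⌊φ⌋ := by rw [Int.floor_intCast_add]
  have h3 : ⌈θ⌉ ≤ ⌊θ⌋ + 1 := Int.ceil_le_floor_add_one θ
  omega

/-- Partial sums of `s`: `psum s n = s 0 + ... + s (n-1)` (signed for negative `n`). -/
noncomputable def psum (s : ℤ → ℤ) (n : ℤ) : ℤ :=
  (∑ k ∈ Finset.Icc 0 (n - 1), s k) - ∑ k ∈ Finset.Icc n (-1), s k

lemma psum_step (s : ℤ → ℤ) (n : ℤ) : psum s (n + 1) = psum s n + s n := by
  unfold psum
  rcases le_or_gt 0 n with h | h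
  · rw [Finset.Icc_eq_empty (by omega : ¬ (n ≤ -1)),
      Finset.Icc_eq_empty (by omega : ¬ (n + 1 ≤ -1))]
    have : Finset.Icc 0 (n + 1 - 1) = insert n (Finset.Icc 0 (n - 1)) := by
      ext k; simp; omega
    rw [this, Finset.sum_insert (by simp)]
    ring
  · rw [Finset.Icc_eq_empty (by omega : ¬ ((0:ℤ) ≤ n + 1 - 1)),
      Finset.Icc_eq_empty (by omega : ¬ ((0:ℤ) ≤ n - 1))]
    have : Finset.Icc n (-1) = insert n (Finset.Icc (n + 1) (-1)) := by
      ext k; simp; omega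
    rw [this, Finset.sum_insert (by simp)]
    ring

lemma psum_sum (s : ℤ → ℤ) (x : ℤ) :
    ∀ y, x - 1 ≤ y → ∑ n ∈ Finset.Icc x y, s n = psum s (y + 1) - psum s x := by
  refine Int.le_induction ?_ ?_
  · rw [Finset.Icc_eq_empty (by omega)]
    have : x - 1 + 1 = x := by ring
    rw [this]; simp
  · intro y hy ih
    rw [sum_Icc_top s x y (by omega), ih, psum_step s (y + 1)]
    ring

lemma window_step (s : ℤ → ℤ) (a : ℤ) (ha : 0 < a) (hper : ∀ n, s (n + a) = s n) (n : ℤ) :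
    ∑ k ∈ Finset.Icc (n + 1) (n + 1 + a - 1), s k = ∑ k ∈ Finset.Icc n (n + a - 1), s k := by
  have h1 : Finset.Icc (n + 1) (n + 1 + a - 1) = insert (n + a) (Finset.Icc (n + 1) (n + a - 1)) := by
    ext k; simp; omega
  have h2 : Finset.Icc n (n + a - 1) = insert n (Finset.Icc (n + 1) (n + a - 1)) := by
    ext k; simp; omega
  have m1 : (n + a) ∉ Finset.Icc (n + 1) (n + a - 1) := by simp
  have m2 : n ∉ Finset.Icc (n + 1) (n + a - 1) := by simp
  rw [h1, h2, Finset.sum_insert m1, Finset.sum_insert m2, hper n]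

lemma window_const (s : ℤ → ℤ) (a b : ℤ) (ha : 0 < a) (hper : ∀ n, s (n + a) = s n)
    (hones : ∑ k ∈ Finset.Icc 0 (a - 1), s k = b) :
    ∀ n : ℤ, ∑ k ∈ Finset.Icc n (n + a - 1), s k = b := by
  intro n
  induction n using Int.induction_on with
  | zero => simpa using hones
  | succ k ih => rw [window_step s a ha hper k]; exact ih
  | pred k ih =>
    have h := window_step s a ha hper (-(k + 1))
    have e : (-(k+1) + 1 : ℤ) = -k := by ring
    rw [e] at h
    rw [show (-(k:ℤ) - 1) = -((k:ℤ) + 1) from by ring, ← h]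
    exact ih

lemma telescope (f G : ℤ → ℤ) (hf : ∀ m, f m = G m - G (m - 1)) (x : ℤ) :
    ∀ y, x - 1 ≤ y → ∑ n ∈ Finset.Icc x y, f n = G y - G (x - 1) := by
  refine Int.le_induction ?_ ?_
  · rw [Finset.Icc_eq_empty (by omega)]; simp
  · intro y hy ih
    rw [sum_Icc_top f x y (by omega), ih, hf (y + 1)]
    have e : (y + 1 - 1 : ℤ) = y := by ring
    rw [e]; ring

lemma beatty_eq_div (a b n : ℤ) (ha : 0 < a) :
    beatty a b n = b * n / a - b * (n - 1) / a := by
  unfold beatty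
  rw [show ((b : ℚ) * n) = ((b * n : ℤ) : ℚ) by push_cast; ring,
    show ((b : ℚ) * (n - 1)) = ((b * (n - 1) : ℤ) : ℚ) by push_cast; ring,
    floor_idiv _ ha, floor_idiv _ ha]

lemma backward_main (a b : ℤ) (hb : 1 ≤ b) (hba : b < a) (s : ℤ → ℤ)
    (hper : ∀ n : ℤ, s (n + a) = s n)
    (hmin : ∀ p : ℤ, 0 < p → p < a → ¬ (∀ n : ℤ, s (n + p) = s n))
    (hones : ∑ k ∈ Finset.Icc 0 (a - 1), s k = b)
    (hbal : ∀ x y : ℤ, x ≤ y → |a * (psum s y - psum s x) - b * (y - x)| < a) :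
    ∃ i : ℤ, ∀ n : ℤ, s (n + i) = beatty a b n := by
  have ha : 0 < a := by omega
  set d : ℤ → ℤ := fun n => a * psum s n - b * n with hd
  have hdsum : ∀ n, a * psum s n = b * n + d n := by intro n; simp only [hd]; ring
  have hd_diff : ∀ x y : ℤ, |d y - d x| < a := by
    intro x y
    rcases le_total x y with h | h
    · have := hbal x y h
      have e : d y - d x = a * (psum s y - psum s x) - b * (y - x) := by simp [hd]; ring
      rwa [e]
    · have := hbal y x h
      have e : d x - d y = a * (psum s x - psum s y) - b * (x - y) := by simp [hd]; ring
      rw [abs_sub_comm, e]; exact this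
  have hSper : ∀ n : ℤ, psum s (n + a) = psum s n + b := by
    intro n
    have h1 := psum_sum s n (n + a - 1) (by omega)
    have h2 := window_const s a b ha hper hones n
    rw [show n + a - 1 + 1 = n + a from by ring] at h1
    omega
  have hdper : ∀ n : ℤ, d (n + a) = d n := by
    intro n; simp [hd, hSper n]; ring
  have hdmul : ∀ k : ℤ, ∀ n : ℤ, d (n + a * k) = d n := by
    intro k
    induction k using Int.induction_on with
    | zero => simp
    | succ k ih =>
      intro n
      have : n + a * ((k : ℤ) + 1) = (n + a * k) + a := by ring
      rw [this, hdper, ih]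
    | pred k ih =>
      intro n
      have : n + a * (-(k : ℤ) - 1) = (n + a * (-(k:ℤ))) - a := by ring
      have h2 := hdper (n + a * (-(k:ℤ)) - a)
      rw [show n + a * (-(k:ℤ)) - a + a = n + a * (-(k:ℤ)) from by ring] at h2
      rw [this, ← h2]
      exact ih n
  have hdmod : ∀ n : ℤ, d n = d (n % a) := by
    intro n
    conv_lhs => rw [show n = n % a + a * (n / a) from (Int.emod_add_mul_ediv n a).symm]
    rw [hdmul]
  -- minimum of d over a period
  obtain ⟨m, hm_mem, hm_min⟩ : ∃ m, (∃ x ∈ Finset.Icc 0 (a-1), d x = m) ∧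
      ∀ n ∈ Finset.Icc 0 (a-1), m ≤ d n := by
    have hne : ((Finset.Icc 0 (a-1)).image d).Nonempty := by
      refine Finset.image_nonempty.2 ?_
      exact ⟨0, by simp only [Finset.mem_Icc]; omega⟩
    refine ⟨((Finset.Icc 0 (a-1)).image d).min' hne, ?_, ?_⟩
    · simpa [Finset.mem_image] using Finset.min'_mem _ hne
    · intro n hn
      exact Finset.min'_le _ _ (Finset.mem_image_of_mem d hn)
  have hlow : ∀ n : ℤ, m ≤ d n := by
    intro n
    rw [hdmod n]
    refine hm_min _ ?_
    simp only [Finset.mem_Icc]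
    exact ⟨Int.emod_nonneg n (by omega), by have := Int.emod_lt_of_pos n ha; omega⟩
  have hhigh : ∀ n : ℤ, d n ≤ m + a - 1 := by
    intro n
    obtain ⟨x, _, hx⟩ := hm_mem
    have := hd_diff x n
    rw [abs_lt] at this
    omega
  have hres : ∀ n n' : ℤ, (a ∣ d n - d n') → d n = d n' := by
    intro n n' ⟨k, hk⟩
    have h1 := hlow n; have h2 := hhigh n
    have h3 := hlow n'; have h4 := hhigh n'
    have hk0 : k = 0 := by
      rcases lt_trichotomy k 0 with h | h | h
      · have : a * k ≤ a * (-1) := by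
          apply mul_le_mul_of_nonneg_left (by omega) ha.le
        omega
      · exact h
      · have : a * 1 ≤ a * k := by
          apply mul_le_mul_of_nonneg_left (by omega) ha.le
        omega
    rw [hk0, mul_zero] at hk
    omega
  have hddvd : ∀ n : ℤ, a ∣ d n + b * n := by
    intro n
    exact ⟨psum s n, by simp only [hd]; ring⟩
  have hstep : ∀ n : ℤ, a * s n = d (n + 1) - d n + b := by
    intro n
    have h1 := psum_step s n
    have h2 := hdsum (n + 1)
    have h3 := hdsum n
    have h4 : a * psum s (n+1) = a * psum s n + a * s n := by rw [h1]; ring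
    have h5 : b * (n + 1) = b * n + b := by ring
    omega
  have hgcd : IsCoprime a b := by
    rw [Int.isCoprime_iff_gcd_eq_one]
    by_contra hg
    have hga : (Int.gcd a b : ℤ) ∣ a := Int.gcd_dvd_left a b
    have hgb : (Int.gcd a b : ℤ) ∣ b := Int.gcd_dvd_right a b
    have hgpos : 0 < Int.gcd a b := Int.gcd_pos_of_ne_zero_left b (by omega)
    have hg2 : (2 : ℤ) ≤ (Int.gcd a b : ℤ) := by
      have : (1 : ℤ) ≤ (Int.gcd a b : ℤ) := by exact_mod_cast hgpos
      rcases this.lt_or_eq with h | h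
      · omega
      · exact absurd (by exact_mod_cast h.symm) hg
    obtain ⟨p, hp⟩ := hga
    obtain ⟨b', hb'⟩ := hgb
    have hppos : 0 < p := by nlinarith
    have hplt : p < a := by nlinarith
    have hbp : a ∣ b * p := ⟨b', by linear_combination p * hb' - b' * hp⟩
    have hdp : ∀ n : ℤ, d (n + p) = d n := by
      intro n
      refine hres _ _ ?_
      obtain ⟨c₁, hc₁⟩ := hddvd (n + p)
      obtain ⟨c₂, hc₂⟩ := hddvd n
      obtain ⟨c₃, hc₃⟩ := hbp
      exact ⟨c₁ - c₂ - c₃, by rw [mul_sub, mul_sub, ← hc₁, ← hc₂, ← hc₃]; ring⟩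
    refine hmin p hppos hplt fun n => ?_
    have h1 := hstep (n + p)
    have h2 := hstep n
    have h3 := hdp (n + 1)
    have h4 := hdp n
    rw [show n + 1 + p = n + p + 1 from by ring] at h3
    have : a * s (n + p) = a * s n := by omega
    exact mul_left_cancel₀ (by omega) this
  -- d 0 = 0
  have hpsum0 : psum s 0 = 0 := by
    unfold psum
    rw [Finset.Icc_eq_empty (by omega)]
    simp
  have hd0 : d 0 = 0 := by simp [hd, hpsum0]
  set M : ℤ := m + a - 1 with hM
  have hM0 : 0 ≤ M := by have := hhigh 0; omega
  have hMa : M ≤ a - 1 := by have := hlow 0; omega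
  obtain ⟨u, v, huv⟩ := hgcd
  set c : ℤ := v * M with hcdef
  set k : ℤ := u * M with hkdef
  have hc : b * c = M - a * k := by
    have : (u * a + v * b) * M = M := by rw [huv]; ring
    simp only [hcdef, hkdef]
    linarith [this]
  have Sdiv : ∀ n : ℤ, psum s n = (b * n + M) / a := by
    intro n
    have h1 : b * n + M = (M - d n) + a * psum s n := by have := hdsum n; omega
    rw [h1, Int.add_mul_ediv_left _ _ (by omega : a ≠ 0),
      Int.ediv_eq_zero_of_lt (by have := hhigh n; omega) (by have := hlow n; omega)]
    ring
  refine ⟨-(c + 1), fun n => ?_⟩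
  rw [beatty_eq_div a b n ha]
  have hs : s (n + -(c+1)) = psum s (n - c) - psum s (n - c - 1) := by
    have := psum_step s (n - c - 1)
    rw [show n - c - 1 + 1 = n - c from by ring] at this
    rw [show n + -(c+1) = n - c - 1 from by ring]
    omega
  rw [hs, Sdiv, Sdiv]
  have e1 : b * (n - c) + M = b * n + a * k := by linear_combination -hc
  have e2 : b * (n - c - 1) + M = b * (n - 1) + a * k := by linear_combination -hc
  rw [e1, e2, Int.add_mul_ediv_left _ _ (by omega : a ≠ 0),
    Int.add_mul_ediv_left _ _ (by omega : a ≠ 0)]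
  ring

lemma balance_of_fc {a X t : ℤ} (ha : 0 < a) {q : ℚ} (hq : q = ((X : ℤ) : ℚ) / (a : ℚ))
    (h : t = ⌊q⌋ ∨ t = ⌈q⌉) : |a * t - X| < a := by
  subst hq
  rcases h with rfl | rfl
  · rw [floor_idiv X ha]
    have h1 := Int.mul_ediv_add_emod X a
    have h2 := Int.emod_nonneg X (by omega : a ≠ 0)
    have h3 := Int.emod_lt_of_pos X ha
    rw [abs_lt]; constructor <;> linarith
  · have hneg : -(((X : ℤ) : ℚ) / (a : ℚ)) = (((-X : ℤ)) : ℚ) / (a : ℚ) := by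
      push_cast; ring
    have hc : ⌈((X : ℤ) : ℚ) / (a : ℚ)⌉ = -((-X) / a) := by
      have := Int.floor_neg (a := ((X : ℤ) : ℚ) / (a : ℚ))
      rw [hneg, floor_idiv (-X) ha] at this
      omega
    rw [hc]
    have h1 := Int.mul_ediv_add_emod (-X) a
    have h2 := Int.emod_nonneg (-X) (by omega : a ≠ 0)
    have h3 := Int.emod_lt_of_pos (-X) ha
    have e : a * -((-X) / a) = -(a * ((-X) / a)) := by ring
    rw [abs_lt, e]; constructor <;> linarith

lemma forward_main (a b : ℤ) (hb : 1 ≤ b) (hba : b < a) (s : ℤ → ℤ)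
    (h01 : ∀ n : ℤ, s n = 0 ∨ s n = 1) (i : ℤ)
    (hi : ∀ n : ℤ, s (n + i) = beatty a b n)
    (x₀ x₁ : ℤ) (hx : x₀ ≤ x₁) :
    (((Finset.Icc x₀ x₁).filter fun n => s n = 1).card : ℤ) =
        ⌊(b * (x₁ - x₀ + 1) : ℚ) / a⌋ ∨
      (((Finset.Icc x₀ x₁).filter fun n => s n = 1).card : ℤ) =
        ⌈(b * (x₁ - x₀ + 1) : ℚ) / a⌉ := by
  set G : ℤ → ℤ := fun m => ⌊((b : ℚ) * ((m : ℚ) - (i : ℚ))) / (a : ℚ)⌋ with hG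
  have hsum : (((Finset.Icc x₀ x₁).filter fun n => s n = 1).card : ℤ) = G x₁ - G (x₀ - 1) := by
    rw [card_filter_eq_sum s h01]
    have h1 : ∀ n ∈ Finset.Icc x₀ x₁, s n = beatty a b (n - i) := by
      intro n _
      have := hi (n - i)
      rwa [sub_add_cancel] at this
    rw [Finset.sum_congr rfl h1]
    refine telescope _ G ?_ x₀ x₁ (by omega)
    intro m
    unfold beatty
    simp only [hG]
    push_cast
    ring_nf
  rw [hsum]
  have key := floor_ceil_pair ((b * (x₁ - x₀ + 1) : ℚ) / a)
    (((b : ℚ) * (((x₀ - 1 : ℤ) : ℚ) - (i : ℚ))) / (a : ℚ))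
  have e : ((b * (x₁ - x₀ + 1) : ℚ) / a) + ((b : ℚ) * (((x₀ - 1 : ℤ) : ℚ) - (i : ℚ))) / (a : ℚ)
      = ((b : ℚ) * (((x₁ : ℤ) : ℚ) - (i : ℚ))) / (a : ℚ) := by
    rw [← add_div]
    congr 1
    push_cast
    ring
  rw [e] at key
  simp only [hG]
  exact key

theorem stmt15 (a b : ℤ) (hb : 1 ≤ b) (hba : b < a) (s : ℤ → ℤ)
    (h01 : ∀ n : ℤ, s n = 0 ∨ s n = 1)
    (hper : ∀ n : ℤ, s (n + a) = s n)
    (hmin : ∀ p : ℤ, 0 < p → p < a → ¬ (∀ n : ℤ, s (n + p) = s n))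
    (hones : (((Finset.Icc 0 (a - 1)).filter fun n => s n = 1).card : ℤ) = b) :
    (∃ i : ℤ, ∀ n : ℤ, s (n + i) = beatty a b n) ↔
      (∀ x₀ x₁ : ℤ, x₀ ≤ x₁ →
        ((((Finset.Icc x₀ x₁).filter fun n => s n = 1).card : ℤ) =
            ⌊(b * (x₁ - x₀ + 1) : ℚ) / a⌋ ∨
          (((Finset.Icc x₀ x₁).filter fun n => s n = 1).card : ℤ) =
            ⌈(b * (x₁ - x₀ + 1) : ℚ) / a⌉)) := by
  have ha : 0 < a := by omega
  constructor
  · rintro ⟨i, hi⟩ x₀ x₁ hx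
    exact forward_main a b hb hba s h01 i hi x₀ x₁ hx
  · intro H
    have hones' : ∑ k ∈ Finset.Icc 0 (a - 1), s k = b := by
      rw [← card_filter_eq_sum s h01]; exact hones
    have hbal : ∀ x y : ℤ, x ≤ y → |a * (psum s y - psum s x) - b * (y - x)| < a := by
      intro x y hxy
      rcases eq_or_lt_of_le hxy with rfl | hlt
      · simpa using ha
      · have hsum : ∑ n ∈ Finset.Icc x (y - 1), s n = psum s y - psum s x := by
          have := psum_sum s x (y - 1) (by omega)
          rwa [show y - 1 + 1 = y from by ring] at this
        have hcard := H x (y - 1) (by omega)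
        rw [card_filter_eq_sum s h01, hsum] at hcard
        have hq : ((b : ℚ) * (((y - 1 : ℤ) : ℚ) - ((x : ℤ) : ℚ) + 1)) / (a : ℚ)
            = (((b * (y - x) : ℤ)) : ℚ) / (a : ℚ) := by
          push_cast; ring
        rw [hq] at hcard
        have := balance_of_fc ha rfl hcard
        have e : a * (psum s y - psum s x) - b * (y - x)
            = a * (psum s y - psum s x) - b * (y - x) := rfl
        calc |a * (psum s y - psum s x) - b * (y - x)| = |a * (psum s y - psum s x) - b * (y - x)| := rfl
          _ < a := this
    exact backward_main a b hb hba s hper hmin hones' hbal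
end

section
/- Let s : ℤ → ℤ be a periodic sequence with minimal period P(s) ≥ 2. If s is swap symmetric, then s is balanced: there exists k ∈ ℤ such that s(n) ∈ {k, k+1} for all n ∈ ℤ. -/
/-- `swapSeq s p i` decreases `s` by one at positions `≡ i (mod p)` and
increases it by one at positions `≡ i + 1 (mod p)`. -/
def swapSeq (s : ℤ → ℤ) (p i : ℤ) : ℤ → ℤ := fun n =>
  if p ∣ n - i then s n - 1 else if p ∣ n - (i + 1) then s n + 1 else s n

theorem stmt17 (s : ℤ → ℤ) (p : ℤ) (hp : 2 ≤ p)
    (hper : ∀ n : ℤ, s (n + p) = s n)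
    (hmin : ∀ q : ℤ, 0 < q → q < p → ¬ (∀ n : ℤ, s (n + q) = s n))
    (hsym : ∃ i j : ℤ, ∀ n : ℤ, swapSeq s p i (n + j) = s n) :
    ∃ k : ℤ, ∀ n : ℤ, s n = k ∨ s n = k + 1 := by
  obtain ⟨i, j, hs⟩ := hsym
  have hpd1 : ¬ (p ∣ (1:ℤ)) := fun h => by have := Int.le_of_dvd one_pos h; omega
  -- periodicity for all multiples of p
  have hper' : ∀ n m : ℤ, p ∣ m → s (n + m) = s n := by
    rintro n m ⟨c, rfl⟩
    induction c using Int.induction_on with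
    | zero => simp
    | succ c ih =>
        have h := hper (n + p * c)
        rw [show n + p * (c + 1) = n + p * c + p by ring, h, ih]
    | pred c ih =>
        have h := hper (n + p * (-c - 1))
        rw [show n + p * (-c - 1) + p = n + p * (-c) by ring, ih] at h
        rw [show n + p * (-(c:ℤ) - 1) = n + p * (-c - 1) by ring]
        exact h.symm
  set a : ℤ := i - j with ha
  -- the three step lemmas
  have step1 : ∀ n : ℤ, p ∣ n - a → s (n + j) = s n + 1 := by
    intro n hd
    have h := hs n
    simp only [swapSeq] at h
    rw [if_pos (show p ∣ n + j - i by rw [show n + j - i = n - a by rw [ha]; ring]; exact hd)] at h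
    omega
  have step2 : ∀ n : ℤ, p ∣ n - (a + 1) → s (n + j) = s n - 1 := by
    intro n hd
    have h := hs n
    simp only [swapSeq] at h
    have hn1 : ¬ (p ∣ n + j - i) := by
      intro hd2
      have : p ∣ (1:ℤ) := by
        have := dvd_sub hd2 hd
        rwa [show n + j - i - (n - (a + 1)) = 1 by rw [ha]; ring] at this
      exact hpd1 this
    rw [if_neg hn1, if_pos (show p ∣ n + j - (i + 1) by
      rw [show n + j - (i + 1) = n - (a + 1) by rw [ha]; ring]; exact hd)] at h
    omega
  have step3 : ∀ n : ℤ, ¬ p ∣ n - a → ¬ p ∣ n - (a + 1) → s (n + j) = s n := by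
    intro n h1 h2
    have h := hs n
    simp only [swapSeq] at h
    rw [if_neg (show ¬ p ∣ n + j - i by
          rw [show n + j - i = n - a by rw [ha]; ring]; exact h1),
        if_neg (show ¬ p ∣ n + j - (i + 1) by
          rw [show n + j - (i + 1) = n - (a + 1) by rw [ha]; ring]; exact h2)] at h
    exact h
  set F : ℕ → ℤ := fun k => s (a + (k : ℤ) * j) with hFdef
  set e : ℕ → ℤ := fun k =>
    if p ∣ (k : ℤ) * j then 1 else if p ∣ (k : ℤ) * j - 1 then -1 else 0 with hedef
  have hF0 : F 0 = s a := by simp [hFdef]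
  have hF : ∀ k : ℕ, F (k + 1) = F k + e k := by
    intro k
    have key : F (k + 1) = s ((a + (k:ℤ) * j) + j) := by
      simp only [hFdef]; congr 1; push_cast; ring
    have e1 : (a + (k:ℤ) * j) - a = (k:ℤ) * j := by ring
    have e2 : (a + (k:ℤ) * j) - (a + 1) = (k:ℤ) * j - 1 := by ring
    simp only [hedef]
    by_cases h1 : p ∣ (k:ℤ) * j
    · rw [key, step1 _ (by rw [e1]; exact h1), if_pos h1]
    · by_cases h2 : p ∣ (k:ℤ) * j - 1
      · rw [key, step2 _ (by rw [e2]; exact h2), if_neg h1, if_pos h2]; ring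
      · rw [key, step3 _ (by rw [e1]; exact h1) (by rw [e2]; exact h2), if_neg h1, if_neg h2]
        ring
  have hsum : ∀ N : ℕ, ∑ k ∈ Finset.range N, e k = F N - F 0 := by
    intro N
    rw [← Finset.sum_range_sub F N]
    exact Finset.sum_congr rfl (fun k _ => by rw [hF k]; ring)
  have hptn : ((p.toNat : ℤ)) = p := Int.toNat_of_nonneg (by omega)
  have hFp : F p.toNat = F 0 := by
    rw [hF0]
    show s (a + (p.toNat : ℤ) * j) = s a
    rw [hptn]; exact hper' a (p * j) (dvd_mul_right p j)
  have hsum0 : ∑ k ∈ Finset.range p.toNat, e k = 0 := by rw [hsum, hFp]; ring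
  -- existence of t with t*j ≡ 1 (mod p)
  have hex : ∃ k : ℕ, p ∣ (k : ℤ) * j - 1 := by
    by_contra hno
    push_neg at hno
    have he0 : e 0 = 1 := by simp [hedef]
    have hnn : ∀ k ∈ Finset.range p.toNat, 0 ≤ e k := by
      intro k _
      simp only [hedef]
      rcases em (p ∣ (k:ℤ) * j) with h | h
      · simp [h]
      · rw [if_neg h, if_neg (hno k)]
    have h0mem : 0 ∈ Finset.range p.toNat := by
      simp only [Finset.mem_range]; omega
    have := Finset.single_le_sum hnn h0mem
    rw [he0, hsum0] at this
    omega
  set t : ℕ := Nat.find hex with htdef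
  have ht : p ∣ (t : ℤ) * j - 1 := Nat.find_spec hex
  have htmin : ∀ k : ℕ, k < t → ¬ p ∣ (k : ℤ) * j - 1 := fun k hk => Nat.find_min hex hk
  have ht1 : 1 ≤ t := by
    by_contra h
    have : t = 0 := by omega
    rw [this] at ht
    simp only [Nat.cast_zero, zero_mul, zero_sub] at ht
    exact hpd1 ((dvd_neg).mp ht)
  set v : ℤ := s a with hv
  -- values along the orbit up to t are v+1
  have hA : ∀ k : ℕ, 1 ≤ k → k ≤ t → F k = v + 1 := by
    intro k hk1
    induction k, hk1 using Nat.le_induction with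
    | base =>
        intro _
        have := hF 0
        rw [hF0] at this
        have he0 : e 0 = 1 := by simp [hedef]
        rw [this, he0, hv]
    | succ k hk ih =>
        intro hkt
        have hklt : k < t := by omega
        have hFk : F k = v + 1 := ih (by omega)
        have hnd1 : ¬ p ∣ (k:ℤ) * j - 1 := htmin k hklt
        have hnd : ¬ p ∣ (k:ℤ) * j := by
          intro hd
          have : F k = v := by
            simp only [hFdef, hv]
            exact hper' a ((k:ℤ) * j) hd |>.trans rfl |>.symm ▸ (hper' a ((k:ℤ)*j) hd)
          omega
        have : e k = 0 := by simp only [hedef]; rw [if_neg hnd, if_neg hnd1]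
        rw [hF k, this, hFk]; ring
  have hFt : F t = v + 1 := hA t ht1 le_rfl
  have ha1 : s (a + 1) = v + 1 := by
    have : s (a + (t:ℤ) * j) = s (a + 1) := by
      rw [show a + (t:ℤ) * j = (a + 1) + ((t:ℤ) * j - 1) by ring]
      exact hper' (a + 1) _ ht
    rw [← this]; exact hFt
  -- all orbit values are v or v+1
  have hB : ∀ k : ℕ, F k = v ∨ F k = v + 1 := by
    intro k
    induction k with
    | zero => left; rw [hF0, hv]
    | succ k ih =>
        by_cases h1 : p ∣ (k:ℤ) * j
        · have hFk : F k = v := by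
            simp only [hFdef, hv]; exact hper' a ((k:ℤ) * j) h1
          have he : e k = 1 := by simp only [hedef]; rw [if_pos h1]
          right; rw [hF k, he, hFk]
        · by_cases h2 : p ∣ (k:ℤ) * j - 1
          · have hFk : F k = v + 1 := by
              have : s (a + (k:ℤ) * j) = s (a + 1) := by
                rw [show a + (k:ℤ) * j = (a + 1) + ((k:ℤ) * j - 1) by ring]
                exact hper' (a + 1) _ h2
              simp only [hFdef]; rw [this, ha1]
            have he : e k = -1 := by simp only [hedef]; rw [if_neg h1, if_pos h2]
            left; rw [hF k, he, hFk]; ring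
          · have he : e k = 0 := by simp only [hedef]; rw [if_neg h1, if_neg h2]
            rw [hF k, he, add_zero]; exact ih
  -- every n is on the orbit
  refine ⟨v, fun n => ?_⟩
  set k : ℕ := ((t : ℤ) * (n - a) % p).toNat with hkdef
  have hk : (k : ℤ) = (t : ℤ) * (n - a) % p :=
    Int.toNat_of_nonneg (Int.emod_nonneg _ (by omega))
  have hd1 : p ∣ (t : ℤ) * (n - a) - (k : ℤ) := by
    rw [hk]
    exact Int.dvd_self_sub_of_emod_eq rfl
  have hd2 : p ∣ (k : ℤ) * j - (n - a) := by
    have heq : (k : ℤ) * j - (n - a) =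
        -(((t : ℤ) * (n - a) - (k : ℤ)) * j) + (n - a) * ((t : ℤ) * j - 1) := by ring
    rw [heq]
    exact dvd_add ((dvd_neg).mpr (hd1.mul_right j)) (ht.mul_left (n - a))
  have : F k = s n := by
    simp only [hFdef]
    rw [show a + (k : ℤ) * j = n + ((k:ℤ) * j - (n - a)) by ring]
    exact hper' n _ hd2
  have := hB k
  rw [‹F k = s n›] at this
  exact this
end

section
/- Let n ≥ 2 and a, b be integers with 0 ≤ a, b ≤ n − 1, and suppose the tetrahedron T_{a,b,n} is empty. Set c = n − a − b + 1. Then for every integer k with 2 ≤ k ≤ n − 1, B_{n,a}(k) + B_{n,b}(k) + B_{n,c}(k) = 1. -/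
lemma floorDivInt (p q : ℤ) (hq : 0 < q) : ⌊(p:ℚ)/(q:ℚ)⌋ = p / q := by
  rw [← Int.toNat_of_nonneg hq.le]
  push_cast
  exact Rat.floor_intCast_div_natCast p q.toNat

lemma emodEq (x y n : ℤ) (hn : 0 < n) (hd : n ∣ x - y) (h0 : 0 ≤ y) (h1 : y < n) :
    x % n = y := by
  have : x % n = y % n := Int.emod_eq_emod_iff_emod_sub_eq_zero.mpr
    (Int.emod_eq_zero_of_dvd hd)
  rw [this, Int.emod_eq_of_lt h0 h1]

lemma mem_hull (n a b h x y : ℤ) (hn : 2 ≤ n) (h1 : 1 ≤ h)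
    (hx : h*a ≤ n*x) (hy : h*b ≤ n*y) (hxy : n*(x+y) ≤ h*(a+b) + n - h) :
    (fun i => (((![x, y, h] : Fin 3 → ℤ)) i : ℝ)) ∈
      convexHull ℝ ({![0, 0, 0], ![1, 0, 0], ![0, 1, 0],
        ![(a : ℝ), (b : ℝ), (n : ℝ)]} : Set (Fin 3 → ℝ)) := by
  have hnR : (0:ℝ) < n := by exact_mod_cast (by omega : (0:ℤ) < n)
  set S : Set (Fin 3 → ℝ) := {![0, 0, 0], ![1, 0, 0], ![0, 1, 0], ![(a : ℝ), (b : ℝ), (n : ℝ)]}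
  set z : Fin 4 → (Fin 3 → ℝ) :=
    ![![0, 0, 0], ![1, 0, 0], ![0, 1, 0], ![(a : ℝ), (b : ℝ), (n : ℝ)]] with hz
  set w : Fin 4 → ℝ :=
    ![((n:ℝ) - h - (n*x - h*a) - (n*y - h*b))/n, ((n:ℝ)*x - h*a)/n, ((n:ℝ)*y - h*b)/n, (h:ℝ)/n]
    with hw
  have hw0 : ∀ i ∈ Finset.univ, 0 ≤ w i := by
    intro i _
    fin_cases i <;> simp only [hw, Matrix.cons_val_zero, Matrix.cons_val_one, Matrix.head_cons,
      Matrix.cons_val_two, Matrix.tail_cons, Matrix.cons_val_three] <;>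
      apply div_nonneg _ hnR.le
    · have h' : (0:ℤ) ≤ h*(a+b) + n - h - n*(x+y) := by omega
      have h'' : (0:ℝ) ≤ (h:ℝ)*((a:ℝ)+(b:ℝ)) + (n:ℝ) - (h:ℝ) - (n:ℝ)*((x:ℝ)+(y:ℝ)) := by
        exact_mod_cast h'
      linarith
    · exact_mod_cast (by omega : (0:ℤ) ≤ n*x - h*a)
    · exact_mod_cast (by omega : (0:ℤ) ≤ n*y - h*b)
    · exact_mod_cast (by omega : (0:ℤ) ≤ h)
  have hw1 : ∑ i, w i = 1 := by
    simp [hw, Fin.sum_univ_four]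
    field_simp
    ring
  have hzS : ∀ i ∈ Finset.univ, z i ∈ convexHull ℝ S := by
    intro i _
    apply subset_convexHull
    fin_cases i <;> simp [hz, S]
  have := (convex_convexHull ℝ S).sum_mem hw0 hw1 hzS
  convert this using 1
  funext i
  fin_cases i <;>
    simp [hz, hw, Fin.sum_univ_four] <;> field_simp <;> ring

theorem stmt18 (n a b : ℤ) (hn : 2 ≤ n) (ha0 : 0 ≤ a) (ha1 : a ≤ n - 1)
    (hb0 : 0 ≤ b) (hb1 : b ≤ n - 1)
    (hempty :
      {p : Fin 3 → ℤ | (fun i => (p i : ℝ)) ∈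
          convexHull ℝ ({![0, 0, 0], ![1, 0, 0], ![0, 1, 0],
            ![(a : ℝ), (b : ℝ), (n : ℝ)]} : Set (Fin 3 → ℝ))} =
        ({![0, 0, 0], ![1, 0, 0], ![0, 1, 0], ![a, b, n]} : Set (Fin 3 → ℤ))) :
    ∀ k : ℤ, 2 ≤ k → k ≤ n - 1 →
      beatty n a k + beatty n b k + beatty n (n - a - b + 1) k = 1 := by
  have hn0 : (0:ℤ) < n := by omega
  -- Step 1: no lattice point in the slice at height h.
  have nopt : ∀ h x y : ℤ, 1 ≤ h → h ≤ n - 1 →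
      h*a ≤ n*x → h*b ≤ n*y → n*(x+y) ≤ h*(a+b) + n - h → False := by
    intro h x y h1 h2 hx hy hxy
    have hmem : (![x, y, h] : Fin 3 → ℤ) ∈
        {p : Fin 3 → ℤ | (fun i => (p i : ℝ)) ∈
          convexHull ℝ ({![0, 0, 0], ![1, 0, 0], ![0, 1, 0],
            ![(a : ℝ), (b : ℝ), (n : ℝ)]} : Set (Fin 3 → ℝ))} :=
      mem_hull n a b h x y hn h1 hx hy hxy
    rw [hempty] at hmem
    simp only [Set.mem_insert_iff, Set.mem_singleton_iff] at hmem
    rcases hmem with h' | h' | h' | h' <;>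
    · have := congrFun h' 2
      simp at this
      omega
  -- Step 2: emptiness bound at each height
  have Ebd : ∀ h : ℤ, 1 ≤ h → h ≤ n - 1 →
      n - h + 1 ≤ (-(h*a)) % n + (-(h*b)) % n := by
    intro h h1 h2
    by_contra hcon
    push_neg at hcon
    set r := (-(h*a)) % n with hr
    set s := (-(h*b)) % n with hs
    have hr0 : 0 ≤ r := Int.emod_nonneg _ (by omega)
    have hs0 : 0 ≤ s := Int.emod_nonneg _ (by omega)
    have hrx : n * (-((-(h*a))/n)) = h*a + r := by
      have := Int.mul_ediv_add_emod (-(h*a)) n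
      linarith [this]
    have hsy : n * (-((-(h*b))/n)) = h*b + s := by
      have := Int.mul_ediv_add_emod (-(h*b)) n
      linarith [this]
    exact nopt h (-((-(h*a))/n)) (-((-(h*b))/n)) h1 h2 (by omega) (by omega)
      (by have hab : h*(a+b) = h*a + h*b := by ring
          rw [mul_add]; omega)
  -- Step 3: the two-sided bound on u + v for k in [1, n-1]
  have star : ∀ k : ℤ, 1 ≤ k → k ≤ n - 1 →
      k + 1 ≤ (k*a) % n + (k*b) % n ∧ (k*a) % n + (k*b) % n ≤ n + k - 1 := by
    intro k k1 k2
    set u := (k*a) % n with hu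
    set v := (k*b) % n with hv
    have hu0 : 0 ≤ u := Int.emod_nonneg _ (by omega)
    have hun : u < n := Int.emod_lt_of_pos _ hn0
    have hv0 : 0 ≤ v := Int.emod_nonneg _ (by omega)
    have hvn : v < n := Int.emod_lt_of_pos _ hn0
    -- lower bound: emptiness at height n-k
    have hlow : k + 1 ≤ u + v := by
      have := Ebd (n-k) (by omega) (by omega)
      have e1 : (-( (n-k)*a)) % n = u := by
        rw [hu]
        apply Int.emod_eq_emod_iff_emod_sub_eq_zero.mpr
        apply Int.emod_eq_zero_of_dvd
        exact ⟨-a, by ring⟩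
      have e2 : (-( (n-k)*b)) % n = v := by
        rw [hv]
        apply Int.emod_eq_emod_iff_emod_sub_eq_zero.mpr
        apply Int.emod_eq_zero_of_dvd
        exact ⟨-b, by ring⟩
      rw [e1, e2] at this
      omega
    refine ⟨hlow, ?_⟩
    -- upper bound: emptiness at height k, with case analysis on s, t
    have hE := Ebd k k1 k2
    set s := (-(k*a)) % n with hsd
    set t := (-(k*b)) % n with htd
    have hs0 : 0 ≤ s := Int.emod_nonneg _ (by omega)
    have hsn : s < n := Int.emod_lt_of_pos _ hn0
    have ht0 : 0 ≤ t := Int.emod_nonneg _ (by omega)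
    have htn : t < n := Int.emod_lt_of_pos _ hn0
    have hus : n ∣ u + s := by
      have : (u + s) % n = 0 := by
        conv_lhs => rw [hu, hsd, Int.add_emod, Int.emod_emod_of_dvd _ dvd_rfl,
          Int.emod_emod_of_dvd _ dvd_rfl, ← Int.add_emod]
        simp
      exact Int.dvd_of_emod_eq_zero this
    have hvt : n ∣ v + t := by
      have : (v + t) % n = 0 := by
        conv_lhs => rw [hv, htd, Int.add_emod, Int.emod_emod_of_dvd _ dvd_rfl,
          Int.emod_emod_of_dvd _ dvd_rfl, ← Int.add_emod]
        simp
      exact Int.dvd_of_emod_eq_zero this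
    obtain ⟨m1, hm1⟩ := hus
    obtain ⟨m2, hm2⟩ := hvt
    have hm1' : m1 = 0 ∨ m1 = 1 := by
      rcases lt_trichotomy m1 0 with h' | h' | h'
      · nlinarith
      · left; exact h'
      · right; nlinarith
    have hm2' : m2 = 0 ∨ m2 = 1 := by
      rcases lt_trichotomy m2 0 with h' | h' | h'
      · nlinarith
      · left; exact h'
      · right; nlinarith
    rcases hm1' with h1' | h1' <;> rcases hm2' with h2' | h2' <;> subst h1' h2' <;> omega
  intro k hk2 hk1
  -- Step 4: floor-sum identity at a single height
  have qsum : ∀ j : ℤ, 1 ≤ j → j ≤ n - 1 →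
      (a*j)/n + (b*j)/n + ((n-a-b+1)*j)/n = j - 1 := by
    intro j j1 j2
    obtain ⟨hlo, hhi⟩ := star j j1 j2
    set u := (j*a) % n with hu
    set v := (j*b) % n with hv
    have hu0 : 0 ≤ u := Int.emod_nonneg _ (by omega)
    have hun : u < n := Int.emod_lt_of_pos _ hn0
    have hv0 : 0 ≤ v := Int.emod_nonneg _ (by omega)
    have hq1 : n * ((j*a)/n) = j*a - u := by
      have := Int.mul_ediv_add_emod (j*a) n; omega
    have hq2 : n * ((j*b)/n) = j*b - v := by
      have := Int.mul_ediv_add_emod (j*b) n; omega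
    have hw : ((n-a-b+1)*j) % n = n + j - u - v := by
      apply emodEq _ _ _ hn0 _ (by omega) (by omega)
      refine ⟨j - 1 - (j*a)/n - (j*b)/n, ?_⟩
      have : n * (j - 1 - (j*a)/n - (j*b)/n) = n*(j-1) - (j*a - u) - (j*b - v) := by
        rw [mul_sub, mul_sub, hq1, hq2]
      rw [this]; ring
    have hq3 : n * (((n-a-b+1)*j)/n) = (n-a-b+1)*j - (n + j - u - v) := by
      have := Int.mul_ediv_add_emod ((n-a-b+1)*j) n
      omega
    have key : n * ((a*j)/n + (b*j)/n + ((n-a-b+1)*j)/n) = n * (j - 1) := by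
      rw [mul_add, mul_add, mul_comm a j, mul_comm b j, hq1, hq2, hq3]
      ring
    exact mul_left_cancel₀ (by omega) key
  -- Step 5: conclude
  have e1 := qsum k (by omega) hk1
  have e2 := qsum (k-1) (by omega) (by omega)
  have fdi : ∀ p q : ℤ, ⌊((p:ℚ) * (q:ℚ)) / (n:ℚ)⌋ = (p*q)/n := fun p q => by
    rw [← Int.cast_mul]; exact floorDivInt _ _ hn0
  unfold beatty
  rw [show ((k:ℚ) - 1) = ((k-1 : ℤ) : ℚ) by push_cast; ring]
  rw [fdi a k, fdi a (k-1), fdi b k, fdi b (k-1), fdi (n-a-b+1) k, fdi (n-a-b+1) (k-1)]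
  omega
end

section
/- Let n ≥ 2 and a, b, c be integers with 1 ≤ a, b, c ≤ n − 1 and a + b + c = n + 1. If B_{n,a}(k) + B_{n,b}(k) + B_{n,c}(k) = 1 for every integer k with 2 ≤ k ≤ n − 1, then a = 1 or b = 1 or c = 1. -/
set_option maxHeartbeats 1000000


private lemma modw (N x w v : ℕ) (h : x = w + v*N) (hw : w < N) : x % N = w := by
  rw [h, Nat.add_mul_mod_self_right, Nat.mod_eq_of_lt hw]

lemma claimZ : ∀ N : ℕ, ∀ D : ℕ, 3 ≤ D → D + 2 ≤ N → Nat.gcd D N = 1 →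
    ∃ m : ℕ, 1 ≤ m ∧ 2*m + 1 ≤ N ∧ D*m % N ≤ m := by
  intro N
  induction N using Nat.strong_induction_on with
  | _ N IH =>
  intro D hD3 hDN hgcd
  obtain ⟨q, r, hdm, hrD, hrdef⟩ : ∃ q r, D*q + r = N ∧ r < D ∧ N % D = r :=
    ⟨N/D, N%D, Nat.div_add_mod N D, Nat.mod_lt _ (by omega), rfl⟩
  have hgcdrD : Nat.gcd r D = 1 := by
    have h2 := Nat.gcd_rec D N
    rw [hrdef] at h2
    omega
  have hr1 : 1 ≤ r := by
    rcases Nat.eq_zero_or_pos r with h0 | h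
    · exfalso
      have hdvd : D ∣ N := ⟨q, by omega⟩
      have := Nat.gcd_eq_left hdvd
      omega
    · exact h
  have hq1 : 1 ≤ q := by
    by_contra h
    have hq0 : q = 0 := by omega
    have : D * q = 0 := by rw [hq0]; ring
    omega
  obtain ⟨E, hrE⟩ : ∃ E, r + E = D := ⟨D - r, by omega⟩
  by_cases hpath : 2*D ≤ N + 1
  · -- PATH A
    by_cases hA1 : E ≤ q + 1
    · refine ⟨q + 1, by omega, ?_, ?_⟩
      · have h3q : 3*q ≤ D*q := Nat.mul_le_mul_right q hD3
        omega
      · have he : D*(q+1) = E + 1*N := by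
          have : D*(q+1) = D*q + D := by ring
          omega
        rw [modw N (D*(q+1)) E 1 he (by omega)]
        omega
    · by_cases hAr : r = 1
      · -- A2
        have hq2 : 2 ≤ q := by
          rcases Nat.lt_or_ge q 2 with h | h
          · exfalso
            have hq1' : q = 1 := by omega
            have : D * q = D := by rw [hq1']; ring
            omega
          · exact h
        have hDq3 : q + 3 ≤ D := by omega
        obtain ⟨j0, u, hu', huu⟩ : ∃ j0 u, (q+1)*j0 + u = D + q - 1 ∧ u < q + 1 :=
          ⟨_, _, Nat.div_add_mod (D+q-1) (q+1), Nat.mod_lt _ (by omega)⟩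
        have hu : (q+1) * j0 + u + 1 = D + q := by omega
        have hj0pos : 1 ≤ j0 := by
          by_contra h
          have hj00 : j0 = 0 := by omega
          have : (q+1) * j0 = 0 := by rw [hj00]; ring
          omega
        have hjq : j0 * q + j0 = (q+1) * j0 := by ring
        have hj0D : j0 ≤ D - 1 := by
          have h3j : 3 * j0 ≤ (q+1) * j0 := Nat.mul_le_mul_right j0 (by omega)
          omega
        refine ⟨j0 * q + 1, by omega, ?_, ?_⟩
        · -- cubic inequality: 2*(j0*q+1)+1 ≤ N
          have key : (2*(j0*q) + 2) * (q+1) ≤ (D*q)*(q+1) := by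
            have h1 : 2*q*((q+1)*j0) ≤ 2*q*(D + q - 1) := by
              apply Nat.mul_le_mul_left
              omega
            have e1 : (2*(j0*q) + 2) * (q+1) = 2*q*((q+1)*j0) + 2*(q+1) := by ring
            obtain ⟨q', rfl⟩ : ∃ q', q = q' + 2 := ⟨q - 2, by omega⟩
            obtain ⟨D', rfl⟩ : ∃ D', D = q' + 5 + D' := ⟨D - (q' + 5), by omega⟩
            have h2 : 2*(q'+2)*((q'+5+D') + (q'+2) - 1) = 4*q'*q' + 20*q' + 24 + 2*(D'*q') + 4*D' := by
              have e : (q'+5+D') + (q'+2) - 1 = 2*q' + 6 + D' := by omega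
              rw [e]; ring
            have h3 : ((q'+5+D')*(q'+2))*(q'+3) =
                q'*q'*q' + 10*(q'*q') + 31*q' + 30 + (D'*q')*q' + 5*(D'*q') + 6*D' := by ring
            nlinarith [Nat.zero_le (q'*q'*q'), Nat.zero_le ((D'*q')*q'), Nat.zero_le (q'*q'),
              Nat.zero_le (D'*q')]
          have h4 := Nat.le_of_mul_le_mul_right key (show 0 < q + 1 by omega)
          omega
        · have hkey : D*(j0*q+1) = (D - j0) + j0 * N := by
            have e1 : D*(j0*q+1) + j0 = j0*(D*q + 1) + D := by ring
            have e2 : j0*(D*q+1) = j0*N := by rw [show D*q+1 = N by omega]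
            omega
          rw [modw N _ (D - j0) j0 hkey (by omega)]
          omega
      · -- A3 : recursion
        have hr2 : 2 ≤ r := by omega
        have hE3 : 3 ≤ E := by omega
        have hED : E + 2 ≤ D := by omega
        have hgcdED : Nat.gcd E D = 1 := by
          have h1 : Nat.gcd E D ∣ r := by
            have hd1 : Nat.gcd E D ∣ D := Nat.gcd_dvd_right E D
            have hd2 : Nat.gcd E D ∣ E := Nat.gcd_dvd_left E D
            have : r = D - E := by omega
            rw [this]
            exact Nat.dvd_sub hd1 hd2
          have h2 : Nat.gcd E D ∣ Nat.gcd r D := Nat.dvd_gcd h1 (Nat.gcd_dvd_right E D)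
          rw [hgcdrD] at h2
          exact Nat.eq_one_of_dvd_one h2
        obtain ⟨j, hj1, hj2, hj3⟩ := IH D (by omega) E hE3 hED hgcdED
        obtain ⟨t, ε, htε, hεdef⟩ : ∃ t ε, D*t + ε = E*j ∧ E*j % D = ε :=
          ⟨_, _, Nat.div_add_mod (E*j) D, rfl⟩
        rw [hεdef] at hj3
        have hε1 : 1 ≤ ε := by
          rcases Nat.eq_zero_or_pos ε with h0 | h
          · exfalso
            have hdvd : D ∣ E * j := Nat.dvd_of_mod_eq_zero (by omega)
            have hco : Nat.Coprime D E := Nat.coprime_comm.mp hgcdED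
            have : D ∣ j := Nat.Coprime.dvd_of_dvd_mul_left hco hdvd
            have := Nat.le_of_dvd (by omega) this
            omega
          · exact h
        have hNE : N + E = D*(q+1) := by
          have : D*(q+1) = D*q + D := by ring
          omega
        have h3 : D*(j*(q+1)) = j*N + E*j := by
          calc D*(j*(q+1)) = j*(D*(q+1)) := by ring
          _ = j*(N+E) := by rw [hNE]
          _ = j*N + E*j := by ring
        have ht_le : t ≤ j*(q+1) := by
          have h4 : D * t ≤ D * (j*(q+1)) := by omega
          exact Nat.le_of_mul_le_mul_left h4 (by omega)
        obtain ⟨m, hm⟩ : ∃ m, m + t = j*(q+1) := ⟨j*(q+1) - t, by omega⟩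
        have key : D * m = j * N + ε := by
          have e1 : D * m + D * t = D*(j*(q+1)) := by
            calc D * m + D * t = D * (m + t) := by ring
            _ = D*(j*(q+1)) := by rw [hm]
          omega
        have hmj : j ≤ m := by
          have h5 : D * j ≤ D * m := by
            have h6 : D * j = j * D := by ring
            have h7 : j * D ≤ j * N := Nat.mul_le_mul_left j (by omega)
            omega
          exact Nat.le_of_mul_le_mul_left h5 (by omega)
        refine ⟨m, by omega, ?_, ?_⟩
        · have h6 : (2*j+1)*N ≤ D*N := Nat.mul_le_mul_right N hj2
          have e3 : (2*j+1)*N = 2*(j*N) + N := by ring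
          have h8 : (2*m+1)*D ≤ N*D := by
            have e4 : (2*m+1)*D = 2*(D*m) + D := by ring
            have e5 : N*D = D*N := by ring
            omega
          exact Nat.le_of_mul_le_mul_right h8 (by omega)
        · rw [modw N _ ε j (by omega) (by omega)]
          omega
  · -- PATH B
    obtain ⟨K, hDK⟩ : ∃ K, D + K = N := ⟨N - D, by omega⟩
    have hK2 : 2 ≤ K := by omega
    have h2K : 2*K + 2 ≤ N := by omega
    have hgcdKN : Nat.gcd K N = 1 := by
      have h1 : Nat.gcd K N ∣ D := by
        have hd1 : Nat.gcd K N ∣ K := Nat.gcd_dvd_left K N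
        have hd2 : Nat.gcd K N ∣ N := Nat.gcd_dvd_right K N
        have : D = N - K := by omega
        rw [this]
        exact Nat.dvd_sub hd2 hd1
      have h2 : Nat.gcd K N ∣ Nat.gcd D N := Nat.dvd_gcd h1 (Nat.gcd_dvd_right K N)
      rw [hgcd] at h2
      exact Nat.eq_one_of_dvd_one h2
    obtain ⟨q2, r2, hdm2, hr2K, hr2def⟩ : ∃ q2 r2, K*q2 + r2 = N ∧ r2 < K ∧ N % K = r2 :=
      ⟨N/K, N%K, Nat.div_add_mod N K, Nat.mod_lt _ (by omega), rfl⟩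
    have hgcdr2K : Nat.gcd r2 K = 1 := by
      have h2 := Nat.gcd_rec K N
      rw [hr2def] at h2
      omega
    have hr21 : 1 ≤ r2 := by
      rcases Nat.eq_zero_or_pos r2 with h0 | h
      · exfalso
        have hdvd : K ∣ N := ⟨q2, by omega⟩
        have := Nat.gcd_eq_left hdvd
        omega
      · exact h
    have hq22 : 2 ≤ q2 := by
      by_contra h
      have : K * q2 ≤ K * 1 := Nat.mul_le_mul_left K (by omega)
      omega
    by_cases hB1 : r2 ≤ q2
    · refine ⟨q2, by omega, ?_, ?_⟩
      · have : 2*q2 ≤ K*q2 := Nat.mul_le_mul_right q2 hK2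
        omega
      · have hkey : D*q2 = r2 + (q2 - 1)*N := by
          have e1 : D*q2 + K*q2 = N*q2 := by
            calc D*q2 + K*q2 = (D+K)*q2 := by ring
            _ = N*q2 := by rw [hDK]
          have e2 : N*q2 = (q2-1)*N + N := by
            have h9 : q2 - 1 + 1 = q2 := by omega
            calc N*q2 = (q2 - 1 + 1)*N := by rw [h9]; ring
            _ = (q2-1)*N + N := by ring
          omega
        rw [modw N _ r2 (q2-1) hkey (by omega)]
        omega
    · by_cases hB2 : r2 = K - 1
      · -- B2
        have hKq2 : q2 + 2 ≤ K := by omega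
        have hN1 : K*(q2+1) = N + 1 := by
          have : K*(q2+1) = K*q2 + K := by ring
          omega
        obtain ⟨j0, u, hu', huu⟩ : ∃ j0 u, (q2+1)*j0 + u = K + q2 ∧ u < q2 + 1 :=
          ⟨_, _, Nat.div_add_mod (K+q2) (q2+1), Nat.mod_lt _ (by omega)⟩
        have hj0K : K ≤ (q2+1)*j0 := by omega
        have hj0pos : 1 ≤ j0 := by
          by_contra h
          have hj00 : j0 = 0 := by omega
          have : (q2+1) * j0 = 0 := by rw [hj00]; ring
          omega
        have h2j0 : 2*j0 ≤ K := by
          have h1 : 2*((q2+1)*j0) ≤ 2*(K + q2) := by omega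
          have h2 : 2*(K + q2) ≤ K*(q2+1) := by
            obtain ⟨q', rfl⟩ : ∃ q', q2 = q' + 2 := ⟨q2 - 2, by omega⟩
            obtain ⟨K', rfl⟩ : ∃ K', K = q' + 4 + K' := ⟨K - (q' + 4), by omega⟩
            nlinarith [Nat.zero_le (q'*K'), Nat.zero_le (q'*q')]
          have h3 : (2*j0)*(q2+1) ≤ K*(q2+1) := by
            have e : (2*j0)*(q2+1) = 2*((q2+1)*j0) := by ring
            omega
          exact Nat.le_of_mul_le_mul_right h3 (by omega)
        obtain ⟨m, hm⟩ : ∃ m, m + 1 = j0*(q2+1) := by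
          refine ⟨j0*(q2+1) - 1, ?_⟩
          have : (q2+1)*j0 = j0*(q2+1) := by ring
          omega
        have hmK : K - 1 ≤ m := by
          have : (q2+1)*j0 = j0*(q2+1) := by ring
          omega
        have hj0m : j0 ≤ m := by
          have h1 : 3*j0 ≤ (q2+1)*j0 := Nat.mul_le_mul_right j0 (by omega)
          have : (q2+1)*j0 = j0*(q2+1) := by ring
          omega
        have hKm : K*m + (K - j0) = j0*N := by
          have e1 : K*m + K = K*(j0*(q2+1)) := by
            calc K*m + K = K*(m+1) := by ring
            _ = K*(j0*(q2+1)) := by rw [hm]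
          have e2 : K*(j0*(q2+1)) = j0*(K*(q2+1)) := by ring
          have e3 : j0*(K*(q2+1)) = j0*N + j0 := by rw [hN1]; ring
          have hj0K' : j0 ≤ K := by omega
          omega
        have hDm : D*m = (K - j0) + (m - j0)*N := by
          have e1 : D*m + K*m = N*m := by
            calc D*m + K*m = (D+K)*m := by ring
            _ = N*m := by rw [hDK]
          have e2 : N*m = (m - j0)*N + j0*N := by
            have h9 : m - j0 + j0 = m := by omega
            calc N*m = (m - j0 + j0)*N := by rw [h9]; ring
            _ = (m-j0)*N + j0*N := by ring
          omega
        refine ⟨m, by omega, ?_, ?_⟩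
        · have h1 : (2*j0)*(q2+1) ≤ K*(q2+1) := Nat.mul_le_mul_right (q2+1) h2j0
          have e : (2*j0)*(q2+1) = 2*(j0*(q2+1)) := by ring
          omega
        · rw [modw N _ (K - j0) (m - j0) hDm (by omega)]
          omega
      · -- B3 recursion
        have hr2q : q2 + 1 ≤ r2 := by omega
        have hr2K2 : r2 + 2 ≤ K := by omega
        have hr23 : 3 ≤ r2 := by omega
        obtain ⟨j, hj1, hj2, hj3⟩ := IH K (by omega) r2 hr23 hr2K2 hgcdr2K
        obtain ⟨t, σ, htσ, hσdef⟩ : ∃ t σ, K*t + σ = r2*j ∧ r2*j % K = σ :=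
          ⟨_, _, Nat.div_add_mod (r2*j) K, rfl⟩
        rw [hσdef] at hj3
        have hσ1 : 1 ≤ σ := by
          rcases Nat.eq_zero_or_pos σ with h0 | h
          · exfalso
            have hdvd : K ∣ r2 * j := Nat.dvd_of_mod_eq_zero (by omega)
            have hco : Nat.Coprime K r2 := Nat.coprime_comm.mp hgcdr2K
            have : K ∣ j := Nat.Coprime.dvd_of_dvd_mul_left hco hdvd
            have := Nat.le_of_dvd (by omega) this
            omega
          · exact h
        have key : K*(j*q2 + t) + σ = j*N := by
          have e1 : K*(j*q2 + t) = j*(K*q2) + K*t := by ring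
          have e2 : j*N = j*(K*q2) + j*r2 := by
            calc j*N = j*(K*q2 + r2) := by rw [hdm2]
            _ = j*(K*q2) + j*r2 := by ring
          have e4 : j * r2 = r2 * j := by ring
          omega
        have hmj : j ≤ j*q2 + t := by
          have h5 : K * j ≤ K * (j*q2 + t) := by
            have h6 : j*(K+1) ≤ j*N := Nat.mul_le_mul_left j (by omega)
            have e : j*(K+1) = K*j + j := by ring
            omega
          exact Nat.le_of_mul_le_mul_left h5 (by omega)
        have hDm : D*(j*q2 + t) = σ + ((j*q2 + t) - j)*N := by
          have e1 : D*(j*q2 + t) + K*(j*q2 + t) = N*(j*q2 + t) := by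
            calc D*(j*q2 + t) + K*(j*q2 + t) = (D+K)*(j*q2 + t) := by ring
            _ = N*(j*q2 + t) := by rw [hDK]
          have e2 : N*(j*q2 + t) = ((j*q2 + t) - j)*N + j*N := by
            have h9 : (j*q2 + t) - j + j = j*q2 + t := by omega
            calc N*(j*q2 + t) = ((j*q2 + t) - j + j)*N := by rw [h9]; ring
            _ = ((j*q2 + t) - j)*N + j*N := by ring
          omega
        refine ⟨j*q2 + t, by omega, ?_, ?_⟩
        · have h6 : (2*j+1)*N ≤ K*N := Nat.mul_le_mul_right N hj2
          have e3 : (2*j+1)*N = 2*(j*N) + N := by ring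
          have h8 : (2*(j*q2 + t)+1)*K ≤ N*K := by
            have e4 : (2*(j*q2 + t)+1)*K = 2*(K*(j*q2 + t)) + K := by ring
            have e5 : N*K = K*N := by ring
            omega
          exact Nat.le_of_mul_le_mul_right h8 (by omega)
        · rw [modw N _ σ ((j*q2 + t) - j) hDm (by omega)]
          omega

-- S identity from floor identity
lemma S_of_F (n a b c : ℤ) (hn : 0 < n) (hsum : a + b + c = n + 1)
    (hF : ∀ k : ℤ, 1 ≤ k → k ≤ n - 1 → a*k/n + b*k/n + c*k/n = k - 1) :
    ∀ k : ℤ, 1 ≤ k → k ≤ n - 1 → a*k % n + b*k % n + c*k % n = n + k := by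
  intro k hk1 hk2
  have hFk := hF k hk1 hk2
  have ea := Int.mul_ediv_add_emod (a*k) n
  have eb := Int.mul_ediv_add_emod (b*k) n
  have ec := Int.mul_ediv_add_emod (c*k) n
  have h1 : n*(a*k/n) + n*(b*k/n) + n*(c*k/n) = n*(k-1) := by
    have : n*(a*k/n) + n*(b*k/n) + n*(c*k/n) = n*(a*k/n + b*k/n + c*k/n) := by ring
    rw [this, hFk]
  have h2 : a*k + b*k + c*k = n*k + k := by
    have : a*k + b*k + c*k = (a+b+c)*k := by ring
    rw [this, hsum]; ring
  have h3 : n*(k-1) = n*k - n := by ring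
  linarith

lemma nozero_of (n a b c : ℤ) (hn : 2 ≤ n) (hsum : a + b + c = n + 1)
    (hF : ∀ k : ℤ, 1 ≤ k → k ≤ n - 1 → a*k/n + b*k/n + c*k/n = k - 1) :
    ∀ k : ℤ, 1 ≤ k → k ≤ n - 1 → (1 ≤ a*k % n ∧ 1 ≤ b*k % n ∧ 1 ≤ c*k % n) := by
  have hn0 : (0:ℤ) < n := by omega
  have hS := S_of_F n a b c hn0 hsum hF
  intro k hk1 hk2
  have hS1 := hS k hk1 hk2
  have hS2 := hS (n-k) (by omega) (by omega)
  -- pair identity for each x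
  have pair : ∀ x : ℤ, x*(n-k) % n = (n - x*k % n) % n := by
    intro x
    have hx := Int.mul_ediv_add_emod (x*k) n
    have h1 : x*(n-k) = (n - x*k % n) + n*(x - 1 - x*k/n) := by linarith [hx]; 
    rw [h1, Int.add_mul_emod_self_left]
  have key : ∀ x : ℤ, (x*k % n = 0 ∧ x*(n-k) % n = 0) ∨
      (1 ≤ x*k % n ∧ x*k % n + x*(n-k) % n = n) := by
    intro x
    have hb1 : 0 ≤ x*k % n := Int.emod_nonneg _ (by omega)
    have hb2 : x*k % n < n := Int.emod_lt_of_pos _ hn0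
    rcases eq_or_lt_of_le hb1 with h0 | hpos
    · left
      constructor
      · omega
      · rw [pair x, ← h0]
        simp
    · right
      refine ⟨by omega, ?_⟩
      have h5 : (n - x*k % n) % n = n - x*k % n :=
        Int.emod_eq_of_lt (by omega) (by omega)
      rw [pair x, h5]
      omega
  have ka := key a; have kb := key b; have kc := key c
  have ba2 : 0 ≤ a*(n-k) % n := Int.emod_nonneg _ (by omega)
  have bb2 : 0 ≤ b*(n-k) % n := Int.emod_nonneg _ (by omega)
  have bc2 : 0 ≤ c*(n-k) % n := Int.emod_nonneg _ (by omega)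
  rcases ka with ⟨ha0, ha0'⟩ | ⟨ha1, hap⟩ <;>
    rcases kb with ⟨hb0, hb0'⟩ | ⟨hb1, hbp⟩ <;>
      rcases kc with ⟨hc0, hc0'⟩ | ⟨hc1, hcp⟩ <;>
        omega

lemma gcdA_of (n a b c : ℤ) (hn : 2 ≤ n) (hsum : a + b + c = n + 1)
    (hF : ∀ k : ℤ, 1 ≤ k → k ≤ n - 1 → a*k/n + b*k/n + c*k/n = k - 1) :
    Int.gcd a n = 1 := by
  by_contra hg
  have hnz := nozero_of n a b c hn hsum hF
  have hgpos : 0 < Int.gcd a n := Int.gcd_pos_iff.mpr (Or.inr (by omega))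
  have hg2 : 2 ≤ (Int.gcd a n : ℤ) := by exact_mod_cast by omega
  have hdvda : ((Int.gcd a n : ℤ)) ∣ a := Int.gcd_dvd_left _ _
  have hdvdn : ((Int.gcd a n : ℤ)) ∣ n := Int.gcd_dvd_right _ _
  obtain ⟨k, hk⟩ := hdvdn
  obtain ⟨a', ha'⟩ := hdvda
  have hk1 : 1 ≤ k := by nlinarith
  have hk2 : k ≤ n - 1 := by nlinarith
  have hzero : a * k % n = 0 := by
    have : a * k = a' * n := by linear_combination k * ha' - a' * hk
    rw [this]
    exact Int.mul_emod_left a' n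
  have := (hnz k hk1 hk2).1
  omega

private lemma edivw (n x w v : ℤ) (h : x = w + v*n) (h0 : 0 ≤ w) (hw : w < n) : x / n = v := by
  rw [h, Int.add_mul_ediv_right _ _ (by omega : n ≠ 0),
    Int.ediv_eq_zero_of_lt h0 hw, zero_add]

private lemma emodw (n x w v : ℤ) (h : x = w + v*n) (h0 : 0 ≤ w) (hw : w < n) : x % n = w := by
  rw [h, Int.add_mul_emod_self_right, Int.emod_eq_of_lt h0 hw]

private lemma transfer (n c x J p ρ : ℤ) (hn : 7 ≤ n) (hc0 : 0 < c) (hcn : c ≤ n - 1)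
    (hx1 : 2 ≤ x) (hxc : x ≤ c - 1)
    (hρ1 : 1 ≤ ρ) (hρc : ρ ≤ c - 1)
    (hcp : c*p = J*n + ρ)
    (heq : x*p/n = x*(p-1)/n) :
    x*p/n = x*J/c := by
  have hA := Int.mul_ediv_add_emod (x*J) c
  have hα0 : 0 ≤ x*J%c := Int.emod_nonneg _ (by omega)
  have hαc : x*J%c < c := Int.emod_lt_of_pos _ hc0
  have hcW : c*(x*p - (x*J/c)*n) = (x*J%c)*n + x*ρ := by
    linear_combination x * hcp - n * hA
  have hW1 : 1 ≤ x*p - (x*J/c)*n := by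
    by_contra h
    have h1 : x*p - (x*J/c)*n ≤ 0 := by omega
    have h2 : c*(x*p - (x*J/c)*n) ≤ c*0 := mul_le_mul_of_nonneg_left h1 (by omega)
    nlinarith [mul_nonneg hα0 (show (0:ℤ) ≤ n by omega),
      mul_pos (show (0:ℤ) < x by omega) (show (0:ℤ) < ρ by omega)]
  have hWn : x*p - (x*J/c)*n < n + x := by
    by_contra h
    have h1 : n + x ≤ x*p - (x*J/c)*n := by omega
    have h2 : c*(n+x) ≤ c*(x*p - (x*J/c)*n) := mul_le_mul_of_nonneg_left h1 (by omega)
    have h3 : (x*J%c)*n ≤ (c-1)*n := mul_le_mul_of_nonneg_right (by omega) (by omega)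
    have h4 : x*ρ ≤ x*(c-1) := mul_le_mul_of_nonneg_left (by omega) (by omega)
    nlinarith
  by_cases hWcase : x*p - (x*J/c)*n ≤ n - 1
  · have hsplit : x*p = (x*p - (x*J/c)*n) + (x*J/c)*n := by ring
    rw [edivw n (x*p) _ (x*J/c) hsplit (by omega) (by omega)]
  · exfalso
    have h1 : x*J/c + 1 ≤ x*p/n := by
      rw [Int.le_ediv_iff_mul_le (show (0:ℤ) < n by omega)]
      have e : (x*J/c+1)*n = (x*J/c)*n + n := by ring
      omega
    have h2 : x*(p-1)/n < x*J/c + 1 := by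
      rw [Int.ediv_lt_iff_lt_mul (show (0:ℤ) < n by omega)]
      have e : (x*J/c+1)*n = (x*J/c)*n + n := by ring
      have e2 : x*(p-1) = x*p - x := by ring
      omega
    omega

private lemma core (f : ℕ)
    (IH : ∀ n a b c : ℤ, n.toNat ≤ f → 2 ≤ n → 1 ≤ a → a ≤ n-1 → 1 ≤ b → b ≤ n-1 →
        1 ≤ c → c ≤ n-1 → a+b+c = n+1 →
        (∀ k : ℤ, 1 ≤ k → k ≤ n-1 → a*k/n + b*k/n + c*k/n = k - 1) →
        a = 1 ∨ b = 1 ∨ c = 1)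
    (n a b c : ℤ) (hfuel : n.toNat ≤ f + 1)
    (h2a : 2 ≤ a) (h2b : 2 ≤ b) (hcn : c ≤ n - 1) (hbig : n + 1 ≤ 2*c)
    (hsum : a + b + c = n + 1)
    (hF : ∀ k : ℤ, 1 ≤ k → k ≤ n-1 → a*k/n + b*k/n + c*k/n = k - 1) : False := by
  have hn7 : 7 ≤ n := by omega
  have hc4 : 4 ≤ c := by omega
  have hac : a ≤ c - 2 := by omega
  have hbc : b ≤ c - 2 := by omega
  have hS := S_of_F n a b c (by omega) hsum hF
  have hgcda : Int.gcd a n = 1 := gcdA_of n a b c (by omega) hsum hF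
  have hgcdc : Int.gcd c n = 1 :=
    gcdA_of n c b a (by omega) (by omega)
      (fun k h1 h2 => by have := hF k h1 h2; linarith)
  -- the reduced floor identity at modulus c
  have hFc : ∀ J : ℤ, 1 ≤ J → J ≤ c - 1 → a*J/c + b*J/c + (2*c-n)*J/c = J - 1 := by
    intro J hJ1 hJ2
    have hc0 : (0:ℤ) < c := by omega
    have hσ0 : 0 ≤ J*n % c := Int.emod_nonneg _ (by omega)
    have hσc : J*n % c < c := Int.emod_lt_of_pos _ hc0
    have hσ1 : 1 ≤ J*n % c := by
      by_contra h
      have hco : IsCoprime (c:ℤ) n := Int.isCoprime_iff_gcd_eq_one.mpr hgcdc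
      have hdvd : c ∣ J*n := Int.dvd_of_emod_eq_zero (by omega)
      have hcJ : c ∣ J := hco.dvd_of_dvd_mul_right hdvd
      have := Int.le_of_dvd (by omega) hcJ
      omega
    obtain ⟨ρ, hρ1, hρc, p, hcp⟩ : ∃ ρ, 1 ≤ ρ ∧ ρ ≤ c - 1 ∧ ∃ p, c*p = J*n + ρ := by
      refine ⟨c - J*n % c, by omega, by omega, J*n/c + 1, ?_⟩
      have h := Int.mul_ediv_add_emod (J*n) c
      linear_combination h
    have hp2 : 2 ≤ p := by
      by_contra h
      have hp1 : p ≤ 1 := by omega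
      have h2 : c*p ≤ c*1 := mul_le_mul_of_nonneg_left hp1 (by omega)
      nlinarith [mul_nonneg (show (0:ℤ) ≤ J - 1 by omega) (show (0:ℤ) ≤ n by omega)]
    have hpn : p ≤ n - 1 := by
      by_contra h
      have hpn' : n ≤ p := by omega
      have h1 : c*n ≤ c*p := mul_le_mul_of_nonneg_left hpn' (by omega)
      have h2 : J*n ≤ (c-1)*n := mul_le_mul_of_nonneg_right (by omega) (by omega)
      nlinarith
    have hq1 : c*p/n = J := edivw n (c*p) ρ J (by linarith) (by omega) (by omega)
    have hq2 : c*(p-1)/n = J - 1 :=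
      edivw n (c*(p-1)) (n + ρ - c) (J-1) (by linear_combination hcp) (by omega) (by omega)
    have hFp := hF p (by omega) hpn
    have hFp1 := hF (p-1) (by omega) (by omega)
    rw [hq1] at hFp
    rw [hq2] at hFp1
    have hma : a*(p-1)/n ≤ a*p/n :=
      Int.ediv_le_ediv (by omega) (mul_le_mul_of_nonneg_left (by omega) (by omega))
    have hmb : b*(p-1)/n ≤ b*p/n :=
      Int.ediv_le_ediv (by omega) (mul_le_mul_of_nonneg_left (by omega) (by omega))
    have haeq : a*p/n = a*(p-1)/n := by linarith
    have hbeq : b*p/n = b*(p-1)/n := by linarith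
    have key_a : a*p/n = a*J/c :=
      transfer n c a J p ρ hn7 hc0 hcn h2a (by omega) hρ1 hρc hcp haeq
    have key_b : b*p/n = b*J/c :=
      transfer n c b J p ρ hn7 hc0 hcn h2b (by omega) hρ1 hρc hcp hbeq
    have hq3 : (2*c-n)*J/c = 2*J - p :=
      edivw c ((2*c-n)*J) ρ (2*J - p) (by linear_combination hcp) (by omega) (by omega)
    rw [hq3, ← key_a, ← key_b]
    linarith
  -- apply induction hypothesis at modulus c
  have hIH := IH c a b (2*c - n) (by omega) (by omega) (by omega) (by omega) (by omega)
    (by omega) (by omega) (by omega) (by omega) hFc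
  have hc2n : 2*c - n = 1 := by
    rcases hIH with h | h | h
    · omega
    · omega
    · exact h
  -- terminal case : n = 2c - 1
  have hterm : ∀ m : ℤ, 1 ≤ m → m ≤ c - 1 → m + 1 ≤ (2*a*m) % n := by
    intro m hm1 hm2
    have hSm := hS (2*m) (by omega) (by omega)
    have hcm : c*(2*m) % n = m :=
      emodw n (c*(2*m)) m m (by linear_combination m*hc2n) (by omega) (by omega)
    have hb2 : b*(2*m) % n < n := Int.emod_lt_of_pos _ (by omega)
    have ha2 : a*(2*m) % n < n := Int.emod_lt_of_pos _ (by omega)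
    have hb0 : 0 ≤ b*(2*m) % n := Int.emod_nonneg _ (by omega)
    have heqm : a*(2*m) = 2*a*m := by ring
    rw [hcm, heqm] at hSm
    omega
  -- convert to ℕ and apply claimZ
  have hD3 : (3:ℤ) ≤ 2*a := by omega
  have hDN : 2*a + 2 ≤ n := by omega
  have hgcdnat : Nat.gcd ((2*a).toNat) (n.toNat) = 1 := by
    have hodd : n.toNat % 2 = 1 := by omega
    have h2n : Nat.Coprime 2 n.toNat := by
      unfold Nat.Coprime
      rw [Nat.gcd_rec, hodd]
      rfl
    have han : Nat.Coprime a.toNat n.toNat := by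
      unfold Nat.Coprime
      have e1 : a.natAbs = a.toNat := by omega
      have e2 : n.natAbs = n.toNat := by omega
      have := hgcda
      unfold Int.gcd at this
      rw [e1, e2] at this
      exact this
    have e3 : (2*a).toNat = 2 * a.toNat := by omega
    rw [e3]
    exact Nat.Coprime.mul h2n han
  obtain ⟨m', hm1, hm2, hm3⟩ := claimZ n.toNat ((2*a).toNat) (by omega) (by omega) hgcdnat
  have hcast : (((2*a).toNat * m' % n.toNat : ℕ) : ℤ) = (2*a*(m':ℤ)) % n := by
    push_cast [Int.natCast_emod]
    rw [Int.toNat_of_nonneg (by omega : (0:ℤ) ≤ 2*a), Int.toNat_of_nonneg (by omega : (0:ℤ) ≤ n)]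
  have hm2' : (m' : ℤ) ≤ c - 1 := by omega
  have hm1' : (1:ℤ) ≤ (m' : ℤ) := by exact_mod_cast hm1
  have := hterm (m' : ℤ) hm1' hm2'
  omega

lemma floorQ (p q : ℤ) (hq : 0 < q) : ⌊(p : ℚ) / (q : ℚ)⌋ = p / q := by
  have h1 : ((q.toNat : ℕ) : ℚ) = (q : ℚ) := by
    exact_mod_cast congrArg (fun z : ℤ => (z : ℚ)) (Int.toNat_of_nonneg hq.le)
  have h2 : ((q.toNat : ℕ) : ℤ) = q := Int.toNat_of_nonneg hq.le
  rw [← h1, Rat.floor_intCast_div_natCast, h2]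

lemma mainZ : ∀ fuel : ℕ, ∀ n a b c : ℤ, n.toNat ≤ fuel → 2 ≤ n →
    1 ≤ a → a ≤ n-1 → 1 ≤ b → b ≤ n-1 → 1 ≤ c → c ≤ n-1 → a+b+c = n+1 →
    (∀ k : ℤ, 1 ≤ k → k ≤ n-1 → a*k/n + b*k/n + c*k/n = k - 1) →
    a = 1 ∨ b = 1 ∨ c = 1 := by
  intro fuel
  induction fuel with
  | zero => intro n a b c hf hn; omega
  | succ f IHf =>
    intro n a b c hf hn ha1 ha2 hb1 hb2 hc1 hc2 hsum hF
    by_contra hcon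
    push_neg at hcon
    obtain ⟨hna, hnb, hnc⟩ := hcon
    have h2a : 2 ≤ a := by omega
    have h2b : 2 ≤ b := by omega
    have h2c : 2 ≤ c := by omega
    have hn5 : 5 ≤ n := by omega
    have hnz := nozero_of n a b c (by omega) hsum hF
    have hS := S_of_F n a b c (by omega) hsum hF
    -- exactly one big element using S(2)
    have hS2 := hS 2 (by omega) (by omega)
    have hnz2 := hnz 2 (by omega) (by omega)
    have ea := Int.mul_ediv_add_emod (a*2) n
    have eb := Int.mul_ediv_add_emod (b*2) n
    have ec := Int.mul_ediv_add_emod (c*2) n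
    have bnda : 0 ≤ a*2 % n ∧ a*2 % n < n :=
      ⟨Int.emod_nonneg _ (by omega), Int.emod_lt_of_pos _ (by omega)⟩
    have bndb : 0 ≤ b*2 % n ∧ b*2 % n < n :=
      ⟨Int.emod_nonneg _ (by omega), Int.emod_lt_of_pos _ (by omega)⟩
    have bndc : 0 ≤ c*2 % n ∧ c*2 % n < n :=
      ⟨Int.emod_nonneg _ (by omega), Int.emod_lt_of_pos _ (by omega)⟩
    have q01 : ∀ x : ℤ, 2 ≤ x → x ≤ n - 1 → n*(x*2/n) + x*2%n = x*2 →
        0 ≤ x*2%n → x*2%n < n → x*2/n = 0 ∨ x*2/n = 1 := by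
      intro x hx1 hx2 he h0 h1
      by_contra h
      push_neg at h
      rcases lt_or_ge (x*2/n) 0 with hq | hq
      · have : x*2/n ≤ -1 := by omega
        have : n*(x*2/n) ≤ n*(-1) := mul_le_mul_of_nonneg_left this (by omega)
        omega
      · have : 2 ≤ x*2/n := by omega
        have : n*2 ≤ n*(x*2/n) := mul_le_mul_of_nonneg_left this (by omega)
        omega
    have qa := q01 a h2a ha2 ea bnda.1 bnda.2
    have qb := q01 b h2b hb2 eb bndb.1 bndb.2
    have qc := q01 c h2c hc2 ec bndc.1 bndc.2
    -- from the sum: exactly one quotient is 1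
    have hsum2 : n*(a*2/n) + n*(b*2/n) + n*(c*2/n) = n - 2 + (a*2%n + b*2%n + c*2%n) - n := by
      have : a*2 + b*2 + c*2 = 2*n + 2 := by omega
      omega
    rcases qa with qa0 | qa1 <;> rcases qb with qb0 | qb1 <;> rcases qc with qc0 | qc1
    · -- all quotients 0 : impossible
      rw [qa0, qb0, qc0] at hsum2
      simp at hsum2
      omega
    · -- c big
      exact core f IHf n a b c hf h2a h2b hc2 (by rw [qc1] at ec; omega) hsum hF
    · -- b big
      refine core f IHf n a c b hf h2a h2c hb2 (by rw [qb1] at eb; omega) (by omega)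
        (fun k h1 h2 => by have := hF k h1 h2; linarith)
    · rw [qb1, qc1] at hsum2
      rw [qa0] at hsum2
      simp at hsum2
      omega
    · -- a big
      refine core f IHf n b c a hf h2b h2c ha2 (by rw [qa1] at ea; omega) (by omega)
        (fun k h1 h2 => by have := hF k h1 h2; linarith)
    · rw [qa1, qc1, qb0] at hsum2
      simp at hsum2
      omega
    · rw [qa1, qb1, qc0] at hsum2
      simp at hsum2
      omega
    · rw [qa1, qb1, qc1] at hsum2
      simp at hsum2
      omega


theorem stmt19 (n a b c : ℤ) (hn : 2 ≤ n)
    (ha : 1 ≤ a) (ha' : a ≤ n - 1) (hb : 1 ≤ b) (hb' : b ≤ n - 1)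
    (hc : 1 ≤ c) (hc' : c ≤ n - 1) (hsum : a + b + c = n + 1)
    (hf : ∀ k : ℤ, 2 ≤ k → k ≤ n - 1 →
      beatty n a k + beatty n b k + beatty n c k = 1) :
    a = 1 ∨ b = 1 ∨ c = 1 := by
  have hn0 : (0:ℤ) < n := by omega
  have hn0 : (0:ℤ) < n := by omega
  have hbeat : ∀ x k : ℤ, beatty n x k = x*k/n - x*(k-1)/n := by
    intro x k
    unfold beatty
    have e1 : ((x * k : ℤ) : ℚ) = (x : ℚ) * (k : ℚ) := by push_cast; ring
    have e2 : ((x * (k-1) : ℤ) : ℚ) = (x : ℚ) * ((k : ℚ) - 1) := by push_cast; ring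
    rw [← e1, ← e2, floorQ _ _ hn0, floorQ _ _ hn0]
  have hFd : ∀ d : ℕ, (1 + (d:ℤ)) ≤ n - 1 →
      a*(1+(d:ℤ))/n + b*(1+(d:ℤ))/n + c*(1+(d:ℤ))/n = (1+(d:ℤ)) - 1 := by
    intro d
    induction d with
    | zero =>
      intro _
      have za : a*(1+((0:ℕ):ℤ))/n = 0 := Int.ediv_eq_zero_of_lt (by push_cast; omega) (by push_cast; omega)
      have zb : b*(1+((0:ℕ):ℤ))/n = 0 := Int.ediv_eq_zero_of_lt (by push_cast; omega) (by push_cast; omega)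
      have zc : c*(1+((0:ℕ):ℤ))/n = 0 := Int.ediv_eq_zero_of_lt (by push_cast; omega) (by push_cast; omega)
      rw [za, zb, zc]
      simp
    | succ d IHd =>
      intro hkn
      have hd1 : ((d+1:ℕ):ℤ) = (d:ℤ) + 1 := by push_cast; ring
      rw [hd1] at hkn ⊢
      have hIH := IHd (by omega)
      have hbk := hf (1+(d:ℤ)+1) (by omega) (by omega)
      rw [hbeat, hbeat, hbeat] at hbk
      have e : 1 + (d:ℤ) + 1 - 1 = 1 + (d:ℤ) := by ring
      rw [e] at hbk
      have e2 : 1 + ((d:ℤ) + 1) = 1 + (d:ℤ) + 1 := by ring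
      rw [e2]
      linarith
  have hF : ∀ k : ℤ, 1 ≤ k → k ≤ n-1 → a*k/n + b*k/n + c*k/n = k - 1 := by
    intro k hk1 hk2
    obtain ⟨d, rfl⟩ : ∃ d : ℕ, k = 1 + (d:ℤ) := ⟨(k-1).toNat, by omega⟩
    exact hFd d hk2
  exact mainZ n.toNat n a b c le_rfl hn ha ha' hb hb' hc hc' hsum hF
end
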